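/- arXiv:1407.1612 — 6 statements merged into one kernel-verified Lean document; each statement's English description precedes it below -/
import Mathlib

section
/- For mutually distinct indices i, j, k, the relation [E_ij, E_ki]·E_kj² = 1 holds in GL(n,ℤ), where [X,Y] = X⁻¹Y⁻¹XY. -/
open Matrix

def Gamma2 (n : ℕ) : Subgroup (GL (Fin n) ℤ) :=
  (Matrix.GeneralLinearGroup.map (n := Fin n) (Int.castRingHom (ZMod 2))).ker

noncomputable def Emat (n : ℕ) (i j : Fin n) : Matrix (Fin n) (Fin n) ℤ :=
  1 + 2 • Matrix.single i j 1

noncomputable def Fmat (n : ℕ) (i : Fin n) : Matrix (Fin n) (Fin n) ℤ :=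
  1 - 2 • Matrix.single i i 1

theorem comm_E_ij_E_ki_mul_E_kj_sq (n : ℕ) (i j k : Fin n)
    (hij : i ≠ j) (hik : i ≠ k) (hjk : j ≠ k)
    (X Y Z : GL (Fin n) ℤ)
    (hX : (X : Matrix (Fin n) (Fin n) ℤ) = Emat n i j)
    (hY : (Y : Matrix (Fin n) (Fin n) ℤ) = Emat n k i)
    (hZ : (Z : Matrix (Fin n) (Fin n) ℤ) = Emat n k j) :
    X⁻¹ * Y⁻¹ * X * Y * Z ^ 2 = 1 := by
  have key : X * Y * Z ^ 2 = Y * X := by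
    ext1
    push_cast [Units.val_mul]
    rw [hX, hY, hZ]
    simp only [Emat, smul_eq_mul, mul_one]
    have hAB : single i j (1:ℤ) * single k i 1 = 0 :=
      Matrix.single_mul_single_of_ne 1 i j _ hjk 1
    have hBA : single k i (1:ℤ) * single i j 1 = single k j 1 := by
      rw [Matrix.single_mul_single_same]; ring_nf
    have hCC : single k j (1:ℤ) * single k j 1 = 0 :=
      Matrix.single_mul_single_of_ne 1 k j _ hjk 1
    have hAC : single i j (1:ℤ) * single k j 1 = 0 :=
      Matrix.single_mul_single_of_ne 1 i j _ hjk 1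
    have hBC : single k i (1:ℤ) * single k j 1 = 0 :=
      Matrix.single_mul_single_of_ne 1 k i _ hik 1
    rw [sq]
    noncomm_ring
    rw [hAB, hBA, hCC, hAC, hBC]
    noncomm_ring
  calc X⁻¹ * Y⁻¹ * X * Y * Z ^ 2 = X⁻¹ * Y⁻¹ * (X * Y * Z ^ 2) := by group
    _ = X⁻¹ * Y⁻¹ * (Y * X) := by rw [key]
    _ = 1 := by group
end

section
/- For each t with 1 ≤ t ≤ n, the map sending A in the stabilizer of e_t in Γ₂(n) to the (n−1)×(n−1) matrix obtained by deleting the t-th row and t-th column of A is a surjective group homomorphism onto Γ₂(n−1). -/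
open Matrix

/-- The subgroup of `GL (Fin n) ℤ` fixing the standard basis vector `e_t`. -/
def colStab (n : ℕ) (t : Fin n) : Subgroup (GL (Fin n) ℤ) where
  carrier := {A | (A : Matrix (Fin n) (Fin n) ℤ).mulVec (Pi.single t 1) = Pi.single t 1}
  one_mem' := by
    show ((1 : GL (Fin n) ℤ) : Matrix (Fin n) (Fin n) ℤ) *ᵥ Pi.single t 1 = Pi.single t 1
    rw [Units.val_one, Matrix.one_mulVec]
  mul_mem' := by
    intro a b ha hb
    simp only [Set.mem_setOf_eq] at *
    rw [Units.val_mul, ← Matrix.mulVec_mulVec, hb, ha]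
  inv_mem' := by
    intro a ha
    simp only [Set.mem_setOf_eq] at *
    conv_lhs => rw [← ha]
    rw [Matrix.mulVec_mulVec, ← Units.val_mul, inv_mul_cancel, Units.val_one,
      Matrix.one_mulVec]

/-- The stabilizer of `e_t` in the level 2 congruence subgroup. -/
def gamma2Stab (n : ℕ) (t : Fin n) : Subgroup (GL (Fin n) ℤ) :=
  Gamma2 n ⊓ colStab n t

section Aux

variable {n : ℕ} {R S : Type*} [CommRing R] [CommRing S]

/-- Extend an `n × n` matrix to an `(n+1) × (n+1)` matrix by inserting the `t`-th row and
column of the identity. -/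
def rcLift (t : Fin (n + 1)) (M : Matrix (Fin n) (Fin n) R) :
    Matrix (Fin (n + 1)) (Fin (n + 1)) R :=
  fun i j => (finSuccEquiv' t i).elim (if j = t then 1 else 0)
    (fun i' => (finSuccEquiv' t j).elim 0 (fun j' => M i' j'))

lemma rcLift_succAbove (t : Fin (n + 1)) (M : Matrix (Fin n) (Fin n) R) (i j : Fin n) :
    rcLift t M (t.succAbove i) (t.succAbove j) = M i j := by
  simp [rcLift, finSuccEquiv'_succAbove]

lemma rcLift_t_right (t : Fin (n + 1)) (M : Matrix (Fin n) (Fin n) R) (i : Fin (n + 1)) :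
    rcLift t M i t = if i = t then 1 else 0 := by
  rcases eq_or_ne i t with hi | hi
  · subst hi
    simp [rcLift, finSuccEquiv'_at]
  · obtain ⟨i', rfl⟩ := Fin.exists_succAbove_eq hi
    simp [rcLift, finSuccEquiv'_succAbove, finSuccEquiv'_at, hi]

lemma rcLift_t_left (t : Fin (n + 1)) (M : Matrix (Fin n) (Fin n) R) (j : Fin (n + 1)) :
    rcLift t M t j = if j = t then 1 else 0 := by
  simp [rcLift, finSuccEquiv'_at]

lemma rcLift_one (t : Fin (n + 1)) : rcLift t (1 : Matrix (Fin n) (Fin n) R) = 1 := by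
  ext i j
  rcases eq_or_ne i t with hi | hi
  · subst hi
    rw [rcLift_t_left]
    rcases eq_or_ne j i with hj | hj
    · subst hj; simp
    · rw [if_neg hj, Matrix.one_apply_ne' hj]
  · obtain ⟨i', rfl⟩ := Fin.exists_succAbove_eq hi
    rcases eq_or_ne j t with hj | hj
    · subst hj
      rw [rcLift_t_right, if_neg hi, Matrix.one_apply_ne hi]
    · obtain ⟨j', rfl⟩ := Fin.exists_succAbove_eq hj
      rw [rcLift_succAbove]
      rcases eq_or_ne i' j' with rfl | hij
      · simp
      · rw [Matrix.one_apply_ne hij,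
          Matrix.one_apply_ne (fun h => hij (Fin.succAbove_right_injective h))]

lemma rcLift_mul (t : Fin (n + 1)) (M N : Matrix (Fin n) (Fin n) R) :
    rcLift t M * rcLift t N = rcLift t (M * N) := by
  ext i j
  rw [Matrix.mul_apply, Fin.sum_univ_succAbove _ t]
  rcases eq_or_ne i t with hi | hi
  · subst hi
    rcases eq_or_ne j i with hj | hj
    · subst hj
      simp [rcLift_t_left, rcLift_t_right, Fin.succAbove_ne]
    · simp [rcLift_t_left, rcLift_t_right, hj, Fin.succAbove_ne]
  · obtain ⟨i', rfl⟩ := Fin.exists_succAbove_eq hi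
    rcases eq_or_ne j t with hj | hj
    · subst hj
      simp [rcLift_t_left, rcLift_t_right, Fin.succAbove_ne]
    · obtain ⟨j', rfl⟩ := Fin.exists_succAbove_eq hj
      simp [rcLift_t_left, rcLift_t_right, rcLift_succAbove, Fin.succAbove_ne,
        Matrix.mul_apply]

lemma rcLift_map (t : Fin (n + 1)) (M : Matrix (Fin n) (Fin n) R) (f : R →+* S) :
    (rcLift t M).map f = rcLift t (M.map f) := by
  ext i j
  rcases eq_or_ne i t with hi | hi
  · subst hi
    simp [Matrix.map_apply, rcLift_t_left, apply_ite f]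
  · obtain ⟨i', rfl⟩ := Fin.exists_succAbove_eq hi
    rcases eq_or_ne j t with hj | hj
    · subst hj
      simp [Matrix.map_apply, rcLift_t_right, hi, apply_ite f]
    · obtain ⟨j', rfl⟩ := Fin.exists_succAbove_eq hj
      simp [Matrix.map_apply, rcLift_succAbove]

lemma submatrix_rcLift (t : Fin (n + 1)) (M : Matrix (Fin n) (Fin n) R) :
    (rcLift t M).submatrix t.succAbove t.succAbove = M := by
  ext i j
  simp [rcLift_succAbove]

/-- Multiplicativity of deleting row/column `t`, given that column `t` of the left factor
vanishes off the diagonal. -/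
lemma submatrix_mul_of_col (t : Fin (n + 1)) (M N : Matrix (Fin (n + 1)) (Fin (n + 1)) R)
    (h : ∀ i, i ≠ t → M i t = 0) :
    (M * N).submatrix t.succAbove t.succAbove =
      M.submatrix t.succAbove t.succAbove * N.submatrix t.succAbove t.succAbove := by
  ext i j
  rw [Matrix.submatrix_apply, Matrix.mul_apply, Fin.sum_univ_succAbove _ t,
    h _ (Fin.succAbove_ne t i), zero_mul, zero_add, Matrix.mul_apply]
  rfl

end Aux

theorem delete_row_column_surj_hom (n : ℕ) (t : Fin (n + 1)) :
    ∃ φ : ↥(gamma2Stab (n + 1) t) →* ↥(Gamma2 n),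
      Function.Surjective φ ∧
      ∀ A : ↥(gamma2Stab (n + 1) t),
        ((φ A : GL (Fin n) ℤ) : Matrix (Fin n) (Fin n) ℤ) =
          Matrix.submatrix ((A : GL (Fin (n + 1)) ℤ) : Matrix (Fin (n + 1)) (Fin (n + 1)) ℤ)
            t.succAbove t.succAbove := by
  classical
  -- column condition from colStab membership
  have hcol : ∀ A : GL (Fin (n + 1)) ℤ, A ∈ colStab (n + 1) t →
      ∀ i, i ≠ t → (A : Matrix (Fin (n + 1)) (Fin (n + 1)) ℤ) i t = 0 := by
    intro A hA i hi
    have := congrFun hA i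
    rw [Matrix.mulVec_single] at this
    simpa [Pi.single_apply, hi] using this
  have hker : ∀ A : GL (Fin (n + 1)) ℤ, A ∈ Gamma2 (n + 1) →
      (A : Matrix (Fin (n + 1)) (Fin (n + 1)) ℤ).map (Int.castRingHom (ZMod 2)) = 1 := by
    intro A hA
    have := congrArg Units.val hA
    exact this
  -- the underlying unit of the deleted matrix
  have hmulsub : ∀ A B : ↥(gamma2Stab (n + 1) t),
      ((A.1 * B.1 : GL (Fin (n + 1)) ℤ) :
          Matrix (Fin (n + 1)) (Fin (n + 1)) ℤ).submatrix t.succAbove t.succAbove =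
        ((A.1 : Matrix (Fin (n + 1)) (Fin (n + 1)) ℤ).submatrix t.succAbove t.succAbove) *
        ((B.1 : Matrix (Fin (n + 1)) (Fin (n + 1)) ℤ).submatrix t.succAbove t.succAbove) := by
    intro A B
    rw [Units.val_mul]
    exact submatrix_mul_of_col t _ _ (hcol A.1 A.2.2)
  have hinj : Function.Injective t.succAbove := Fin.succAbove_right_injective
  -- the deleted unit
  let d : ↥(gamma2Stab (n + 1) t) → GL (Fin n) ℤ := fun A =>
    { val := (A.1 : Matrix (Fin (n + 1)) (Fin (n + 1)) ℤ).submatrix t.succAbove t.succAbove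
      inv := ((A.1⁻¹ : GL (Fin (n + 1)) ℤ) :
          Matrix (Fin (n + 1)) (Fin (n + 1)) ℤ).submatrix t.succAbove t.succAbove
      val_inv := by
        rw [← submatrix_mul_of_col t _ _ (hcol A.1 A.2.2), ← Units.val_mul, mul_inv_cancel,
          Units.val_one, Matrix.submatrix_one _ hinj]
      inv_val := by
        have hAinv : A.1⁻¹ ∈ gamma2Stab (n + 1) t := inv_mem A.2
        rw [← submatrix_mul_of_col t _ _ (hcol A.1⁻¹ hAinv.2), ← Units.val_mul, inv_mul_cancel,
          Units.val_one, Matrix.submatrix_one _ hinj] }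
  have hd : ∀ A, d A ∈ Gamma2 n := by
    intro A
    refine Units.ext ?_
    show ((d A : GL (Fin n) ℤ) : Matrix (Fin n) (Fin n) ℤ).map (Int.castRingHom (ZMod 2)) = 1
    show ((A.1 : Matrix (Fin (n + 1)) (Fin (n + 1)) ℤ).submatrix t.succAbove
        t.succAbove).map (Int.castRingHom (ZMod 2)) = 1
    rw [← Matrix.submatrix_map, hker A.1 A.2.1, Matrix.submatrix_one _ hinj]
  refine ⟨{ toFun := fun A => ⟨d A, hd A⟩
            map_one' := by
              refine Subtype.ext (Units.ext ?_)
              show ((1 : GL (Fin (n + 1)) ℤ) :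
                  Matrix (Fin (n + 1)) (Fin (n + 1)) ℤ).submatrix t.succAbove t.succAbove = _
              rw [Units.val_one, Matrix.submatrix_one _ hinj]
              simp
            map_mul' := by
              intro A B
              refine Subtype.ext (Units.ext ?_)
              exact hmulsub A B }, ?_, fun A => rfl⟩
  rintro ⟨B, hB⟩
  -- lift B
  refine ⟨⟨{ val := rcLift t (B : Matrix (Fin n) (Fin n) ℤ)
             inv := rcLift t ((B⁻¹ : GL (Fin n) ℤ) : Matrix (Fin n) (Fin n) ℤ)
             val_inv := by rw [rcLift_mul, ← Units.val_mul, mul_inv_cancel, Units.val_one, rcLift_one]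
             inv_val := by
               rw [rcLift_mul, ← Units.val_mul, inv_mul_cancel, Units.val_one,
                 rcLift_one] }, ?_, ?_⟩, ?_⟩
  · refine Units.ext ?_
    show (rcLift t (B : Matrix (Fin n) (Fin n) ℤ)).map (Int.castRingHom (ZMod 2)) = 1
    have hB1 : (B : Matrix (Fin n) (Fin n) ℤ).map (Int.castRingHom (ZMod 2)) = 1 :=
      congrArg Units.val hB
    rw [rcLift_map, hB1, rcLift_one]
  · show rcLift t (B : Matrix (Fin n) (Fin n) ℤ) *ᵥ Pi.single t 1 = Pi.single t 1
    funext i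
    rw [Matrix.mulVec_single]
    simp [rcLift_t_right, Pi.single_apply]
  · refine Subtype.ext (Units.ext ?_)
    exact submatrix_rcLift t _
end

section
/- For each t with 1 ≤ t ≤ n (n ≥ 2), there is a short exact sequence 0 → ℤ^{n−1} → Γ₂(n)_{e_t} → Γ₂(n−1) → 1, where ℤ^{n−1} maps by sending the i-th generator to E_{ti} (indices shifted past t), and the second map deletes the t-th row and column. -/
open Matrix

section Aux

variable {n : ℕ} (t : Fin (n + 1))

lemma Fin.eq_self_or_succAbove (j : Fin (n + 1)) : t = j ∨ ∃ k, j = t.succAbove k := by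
  rcases eq_or_ne j t with h | h
  · exact Or.inl h.symm
  · obtain ⟨k, hk⟩ := Fin.exists_succAbove_eq h
    exact Or.inr ⟨k, hk.symm⟩

lemma mem_Gamma2_iff {m : ℕ} (A : GL (Fin m) ℤ) :
    A ∈ Gamma2 m ↔ (A : Matrix (Fin m) (Fin m) ℤ).map (Int.cast : ℤ → ZMod 2) = 1 := by
  rw [Gamma2, MonoidHom.mem_ker, Matrix.GeneralLinearGroup.map, Units.ext_iff]
  rfl

lemma mem_colStab_iff {m : ℕ} (t : Fin m) (A : GL (Fin m) ℤ) :
    A ∈ colStab m t ↔ ∀ i, (A : Matrix (Fin m) (Fin m) ℤ) i t = (Pi.single t 1 : Fin m → ℤ) i := by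
  constructor
  · intro h i
    have := congrFun h i
    simpa using this
  · intro h
    show (A : Matrix (Fin m) (Fin m) ℤ) *ᵥ Pi.single t 1 = Pi.single t 1
    funext i
    simpa using h i

lemma mem_stab₁ {A : GL (Fin (n + 1)) ℤ} (hA : A ∈ gamma2Stab (n + 1) t) :
    A ∈ Gamma2 (n + 1) := (Subgroup.mem_inf.mp hA).1

lemma mem_stab₂ {A : GL (Fin (n + 1)) ℤ} (hA : A ∈ gamma2Stab (n + 1) t) :
    A ∈ colStab (n + 1) t := (Subgroup.mem_inf.mp hA).2

/-- The matrix with row `t` equal to `0` at column `t` and `2 * v i` at column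
`succAbove i`, all other rows zero. -/
def rowMat (v : Fin n → ℤ) : Matrix (Fin (n + 1)) (Fin (n + 1)) ℤ :=
  Matrix.of (Pi.single t (t.insertNth 0 (fun i => 2 * v i)))

lemma rowMat_apply_self (v : Fin n → ℤ) (j : Fin (n + 1)) :
    rowMat t v t j = (t.insertNth 0 (fun i => 2 * v i) : Fin (n + 1) → ℤ) j := by
  simp [rowMat, Pi.single_apply]

lemma rowMat_apply_ne (v : Fin n → ℤ) {i : Fin (n + 1)} (hi : i ≠ t) (j : Fin (n + 1)) :
    rowMat t v i j = 0 := by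
  simp [rowMat, Pi.single_apply, hi]

lemma rowMat_mul_rowMat (v w : Fin n → ℤ) : rowMat t v * rowMat t w = 0 := by
  ext i j
  rw [Matrix.mul_apply]
  rcases eq_or_ne i t with hi | hi
  · rw [Finset.sum_eq_zero, Matrix.zero_apply]
    intro k _
    rcases eq_or_ne k t with hk | hk
    · rw [hi, hk, rowMat_apply_self, Fin.insertNth_apply_same, zero_mul]
    · rw [rowMat_apply_ne t w hk, mul_zero]
  · rw [Finset.sum_eq_zero, Matrix.zero_apply]
    intro k _
    rw [rowMat_apply_ne t v hi, zero_mul]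

def Nmat (v : Fin n → ℤ) : Matrix (Fin (n + 1)) (Fin (n + 1)) ℤ :=
  1 + rowMat t v

lemma Nmat_add (v w : Fin n → ℤ) : Nmat t (v + w) = Nmat t v * Nmat t w := by
  have : rowMat t (v + w) = rowMat t v + rowMat t w := by
    ext i j
    rcases eq_or_ne i t with hi | hi
    · rw [hi, Matrix.add_apply, rowMat_apply_self, rowMat_apply_self, rowMat_apply_self]
      rcases Fin.eq_self_or_succAbove t j with rfl | ⟨k, rfl⟩
      · simp
      · simp [Fin.insertNth_apply_succAbove, mul_add]
    · simp [rowMat_apply_ne t _ hi]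
  rw [Nmat, Nmat, Nmat, this, add_mul, one_mul, mul_add, mul_one, rowMat_mul_rowMat]
  abel

lemma Nmat_zero : Nmat t 0 = 1 := by
  rw [Nmat, add_eq_left]
  ext i j
  rcases eq_or_ne i t with hi | hi
  · rw [hi, rowMat_apply_self]
    rcases Fin.eq_self_or_succAbove t j with rfl | ⟨k, rfl⟩
    · simp
    · simp [Fin.insertNth_apply_succAbove]
  · simp [rowMat_apply_ne t _ hi]

def Nunit (v : Fin n → ℤ) : GL (Fin (n + 1)) ℤ :=
  ⟨Nmat t v, Nmat t (-v), by rw [← Nmat_add, add_neg_cancel, Nmat_zero],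
    by rw [← Nmat_add, neg_add_cancel, Nmat_zero]⟩

lemma Nmat_col (v : Fin n → ℤ) (i : Fin (n + 1)) :
    Nmat t v i t = (Pi.single t 1 : Fin (n + 1) → ℤ) i := by
  rcases eq_or_ne i t with hi | hi
  · rw [hi]
    simp [Nmat, Matrix.one_apply, rowMat_apply_self]
  · simp [Nmat, Matrix.one_apply, rowMat_apply_ne t _ hi, hi, Pi.single_apply]

lemma Nmat_mod2 (v : Fin n → ℤ) :
    (Nmat t v).map (Int.cast : ℤ → ZMod 2) = 1 := by
  ext i j
  rw [Matrix.map_apply, Nmat, Matrix.add_apply]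
  rcases eq_or_ne i t with hi | hi
  · rw [hi, rowMat_apply_self]
    rcases Fin.eq_self_or_succAbove t j with rfl | ⟨k, rfl⟩
    · simp
    · have h2 : ((2 : ℤ) : ZMod 2) = 0 := by decide
      rw [Fin.insertNth_apply_succAbove, Matrix.one_apply_ne (Fin.ne_succAbove t k),
        Matrix.one_apply_ne (Fin.ne_succAbove t k), zero_add, Int.cast_mul, h2, zero_mul]
  · rw [rowMat_apply_ne t _ hi, add_zero, Matrix.one_apply, Matrix.one_apply]
    split <;> simp

lemma Nunit_mem (v : Fin n → ℤ) : Nunit t v ∈ gamma2Stab (n + 1) t := by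
  rw [gamma2Stab, Subgroup.mem_inf]
  constructor
  · rw [mem_Gamma2_iff]
    exact Nmat_mod2 t v
  · rw [mem_colStab_iff]
    exact Nmat_col t v

lemma Nmat_apply_succAbove (v : Fin n → ℤ) (i : Fin n) (j : Fin (n + 1)) :
    Nmat t v (t.succAbove i) j = (1 : Matrix (Fin (n + 1)) (Fin (n + 1)) ℤ) (t.succAbove i) j := by
  rw [Nmat, Matrix.add_apply, rowMat_apply_ne t _ (Fin.succAbove_ne t i), add_zero]

lemma Nmat_apply_row (v : Fin n → ℤ) (i : Fin n) :
    Nmat t v t (t.succAbove i) = 2 * v i := by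
  rw [Nmat, Matrix.add_apply, rowMat_apply_self, Fin.insertNth_apply_succAbove,
    Matrix.one_apply_ne (Fin.ne_succAbove t i), zero_add]

/-- submatrix multiplicativity given vanishing column entries -/
lemma submatrix_mul_of_col_s13 {A B : Matrix (Fin (n + 1)) (Fin (n + 1)) ℤ}
    (hA : ∀ i : Fin n, A (t.succAbove i) t = 0) :
    (A * B).submatrix t.succAbove t.succAbove =
      A.submatrix t.succAbove t.succAbove * B.submatrix t.succAbove t.succAbove := by
  ext i j
  rw [Matrix.submatrix_apply, Matrix.mul_apply, Matrix.mul_apply,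
    Fin.sum_univ_succAbove (fun k => A (t.succAbove i) k * B k (t.succAbove j)) t,
    hA i, zero_mul, zero_add]
  simp

lemma submatrix_one' :
    (1 : Matrix (Fin (n + 1)) (Fin (n + 1)) ℤ).submatrix t.succAbove t.succAbove = 1 :=
  Matrix.submatrix_one _ Fin.succAbove_right_injective

lemma colStab_col {A : GL (Fin (n + 1)) ℤ} (hA : A ∈ colStab (n + 1) t) (i : Fin n) :
    (A : Matrix (Fin (n + 1)) (Fin (n + 1)) ℤ) (t.succAbove i) t = 0 := by
  rw [(mem_colStab_iff t A).mp hA, Pi.single_apply, if_neg (Fin.succAbove_ne t i)]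

/-- the deleted matrix as a unit -/
def subUnit (A : ↥(gamma2Stab (n + 1) t)) : GL (Fin n) ℤ where
  val := ((A : GL (Fin (n + 1)) ℤ) : Matrix (Fin (n + 1)) (Fin (n + 1)) ℤ).submatrix
    t.succAbove t.succAbove
  inv := (((A : GL (Fin (n + 1)) ℤ)⁻¹ : GL (Fin (n + 1)) ℤ) :
    Matrix (Fin (n + 1)) (Fin (n + 1)) ℤ).submatrix t.succAbove t.succAbove
  val_inv := by
    rw [← submatrix_mul_of_col_s13 t (colStab_col t (mem_stab₂ t A.2)), ← Units.val_mul,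
      mul_inv_cancel, Units.val_one, submatrix_one']
  inv_val := by
    rw [← submatrix_mul_of_col_s13 t (colStab_col t ((colStab (n + 1) t).inv_mem
      (mem_stab₂ t A.2))), ← Units.val_mul, inv_mul_cancel, Units.val_one, submatrix_one']

lemma subUnit_mem (A : ↥(gamma2Stab (n + 1) t)) : subUnit t A ∈ Gamma2 n := by
  rw [mem_Gamma2_iff]
  have h := (mem_Gamma2_iff (A : GL (Fin (n + 1)) ℤ)).mp (mem_stab₁ t A.2)
  show (((A : GL (Fin (n + 1)) ℤ) : Matrix (Fin (n + 1)) (Fin (n + 1)) ℤ).submatrix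
      t.succAbove t.succAbove).map (Int.cast : ℤ → ZMod 2) = 1
  rw [← Matrix.submatrix_map, h]
  exact Matrix.submatrix_one _ Fin.succAbove_right_injective

/-- The homomorphism `ℤ^n → Γ₂(n+1)_{e_t}`. -/
def psiHom : Multiplicative (Fin n → ℤ) →* ↥(gamma2Stab (n + 1) t) where
  toFun v := ⟨Nunit t (Multiplicative.toAdd v), Nunit_mem t _⟩
  map_one' := by
    apply Subtype.ext; apply Units.ext
    show Nmat t 0 = ((1 : ↥(gamma2Stab (n + 1) t)) : GL (Fin (n + 1)) ℤ).val
    rw [Nmat_zero, OneMemClass.coe_one, Units.val_one]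
  map_mul' v w := by
    apply Subtype.ext; apply Units.ext
    show Nmat t _ = (_ * _ : GL (Fin (n + 1)) ℤ).val
    rw [Units.val_mul]
    exact Nmat_add t _ _

/-- The homomorphism `Γ₂(n+1)_{e_t} → Γ₂(n)` deleting row and column `t`. -/
def phiHom : ↥(gamma2Stab (n + 1) t) →* ↥(Gamma2 n) where
  toFun A := ⟨subUnit t A, subUnit_mem t A⟩
  map_one' := by
    apply Subtype.ext; apply Units.ext
    show (((1 : ↥(gamma2Stab (n + 1) t)) : GL (Fin (n + 1)) ℤ).val).submatrix
      t.succAbove t.succAbove = ((1 : ↥(Gamma2 n)) : GL (Fin n) ℤ).val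
    rw [OneMemClass.coe_one, Units.val_one, submatrix_one', OneMemClass.coe_one, Units.val_one]
  map_mul' A B := by
    apply Subtype.ext; apply Units.ext
    show (((A * B : ↥(gamma2Stab (n + 1) t)) : GL (Fin (n + 1)) ℤ).val).submatrix
      t.succAbove t.succAbove = ((_ * _ : ↥(Gamma2 n)) : GL (Fin n) ℤ).val
    rw [MulMemClass.coe_mul, Units.val_mul, MulMemClass.coe_mul, Units.val_mul]
    exact submatrix_mul_of_col_s13 t (colStab_col t (mem_stab₂ t A.2))

/-- the lift of a matrix: insert row/column `t` as `e_t` -/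
def liftMat (B : Matrix (Fin n) (Fin n) ℤ) : Matrix (Fin (n + 1)) (Fin (n + 1)) ℤ :=
  Matrix.of (t.insertNth (Pi.single t 1) (fun i => t.insertNth 0 (B i)))

lemma liftMat_apply_self (B : Matrix (Fin n) (Fin n) ℤ) (j : Fin (n + 1)) :
    liftMat t B t j = (Pi.single t 1 : Fin (n + 1) → ℤ) j := by
  simp [liftMat]

lemma liftMat_apply_succAbove (B : Matrix (Fin n) (Fin n) ℤ) (i : Fin n) (j : Fin (n + 1)) :
    liftMat t B (t.succAbove i) j = (t.insertNth 0 (B i) : Fin (n + 1) → ℤ) j := by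
  simp [liftMat]

lemma liftMat_one : liftMat t (1 : Matrix (Fin n) (Fin n) ℤ) = 1 := by
  ext i j
  rcases Fin.eq_self_or_succAbove t i with rfl | ⟨i', rfl⟩
  · rw [liftMat_apply_self, Matrix.one_apply, Pi.single_apply]
    simp [eq_comm]
  · rw [liftMat_apply_succAbove]
    rcases Fin.eq_self_or_succAbove t j with rfl | ⟨j', rfl⟩
    · rw [Fin.insertNth_apply_same, Matrix.one_apply_ne (Fin.succAbove_ne t i')]
    · rw [Fin.insertNth_apply_succAbove]
      simp [Matrix.one_apply, Fin.succAbove_right_injective.eq_iff]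

lemma liftMat_mul (B C : Matrix (Fin n) (Fin n) ℤ) :
    liftMat t (B * C) = liftMat t B * liftMat t C := by
  ext i j
  rw [Matrix.mul_apply]
  rcases Fin.eq_self_or_succAbove t i with rfl | ⟨i', rfl⟩
  · rw [liftMat_apply_self,
      Fin.sum_univ_succAbove (fun k => liftMat t B t k * liftMat t C k j) t]
    simp only [liftMat_apply_self, liftMat_apply_succAbove]
    rw [Pi.single_eq_same, one_mul, Finset.sum_eq_zero, add_zero]
    intro k _
    rw [Pi.single_apply, if_neg (Fin.succAbove_ne t k), zero_mul]
  · rw [liftMat_apply_succAbove,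
      Fin.sum_univ_succAbove (fun k => liftMat t B (t.succAbove i') k * liftMat t C k j) t]
    simp only [liftMat_apply_succAbove, Fin.insertNth_apply_same, Fin.insertNth_apply_succAbove,
      zero_mul, zero_add]
    rcases Fin.eq_self_or_succAbove t j with rfl | ⟨j', rfl⟩
    · simp only [Fin.insertNth_apply_same, liftMat_apply_succAbove]
      simp
    · simp only [Fin.insertNth_apply_succAbove, liftMat_apply_succAbove, Matrix.mul_apply]

lemma liftMat_submatrix (B : Matrix (Fin n) (Fin n) ℤ) :
    (liftMat t B).submatrix t.succAbove t.succAbove = B := by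
  ext i j
  rw [Matrix.submatrix_apply, liftMat_apply_succAbove, Fin.insertNth_apply_succAbove]

def liftUnit (B : GL (Fin n) ℤ) : GL (Fin (n + 1)) ℤ :=
  ⟨liftMat t B, liftMat t ((B⁻¹ : GL (Fin n) ℤ) : Matrix (Fin n) (Fin n) ℤ),
    by rw [← liftMat_mul, ← Units.val_mul, mul_inv_cancel, Units.val_one, liftMat_one],
    by rw [← liftMat_mul, ← Units.val_mul, inv_mul_cancel, Units.val_one, liftMat_one]⟩

lemma liftUnit_mem {B : GL (Fin n) ℤ} (hB : B ∈ Gamma2 n) :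
    liftUnit t B ∈ gamma2Stab (n + 1) t := by
  rw [gamma2Stab, Subgroup.mem_inf]
  constructor
  · rw [mem_Gamma2_iff]
    have h := (mem_Gamma2_iff B).mp hB
    ext i j
    show ((liftMat t B i j : ℤ) : ZMod 2) = _
    rcases Fin.eq_self_or_succAbove t i with rfl | ⟨i', rfl⟩
    · rw [liftMat_apply_self, Pi.single_apply, Matrix.one_apply]
      rcases eq_or_ne t j with rfl | hj
      · rw [if_pos rfl, if_pos rfl, Int.cast_one]
      · rw [if_neg (fun hh => hj hh.symm), if_neg hj, Int.cast_zero]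
    · rw [liftMat_apply_succAbove]
      rcases Fin.eq_self_or_succAbove t j with rfl | ⟨j', rfl⟩
      · rw [Fin.insertNth_apply_same, Matrix.one_apply_ne (Fin.succAbove_ne t i')]
        simp
      · rw [Fin.insertNth_apply_succAbove]
        have h2 := congrFun (congrFun h i') j'
        rw [Matrix.map_apply] at h2
        rw [h2]
        simp [Matrix.one_apply, Fin.succAbove_right_injective.eq_iff]
  · rw [mem_colStab_iff]
    intro i
    show liftMat t B i t = _
    rcases Fin.eq_self_or_succAbove t i with rfl | ⟨i', rfl⟩
    · rw [liftMat_apply_self]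
    · rw [liftMat_apply_succAbove, Fin.insertNth_apply_same, Pi.single_apply,
        if_neg (Fin.succAbove_ne t i')]

end Aux

theorem gamma2_stab_short_exact (n : ℕ) (t : Fin (n + 1)) :
    ∃ (ψ : Multiplicative (Fin n → ℤ) →* ↥(gamma2Stab (n + 1) t))
      (φ : ↥(gamma2Stab (n + 1) t) →* ↥(Gamma2 n)),
      Function.Injective ψ ∧
      Function.Surjective φ ∧
      ψ.range = φ.ker ∧
      (∀ i : Fin n,
        (((ψ (Multiplicative.ofAdd (Pi.single i 1)) : ↥(gamma2Stab (n + 1) t)) :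
            GL (Fin (n + 1)) ℤ) : Matrix (Fin (n + 1)) (Fin (n + 1)) ℤ) =
          Emat (n + 1) t (t.succAbove i)) ∧
      (∀ A : ↥(gamma2Stab (n + 1) t),
        ((φ A : GL (Fin n) ℤ) : Matrix (Fin n) (Fin n) ℤ) =
          Matrix.submatrix ((A : GL (Fin (n + 1)) ℤ) : Matrix (Fin (n + 1)) (Fin (n + 1)) ℤ)
            t.succAbove t.succAbove) := by
  refine ⟨psiHom t, phiHom t, ?_, ?_, ?_, ?_, fun A => rfl⟩
  · intro v w h
    have h2 : Nmat t (Multiplicative.toAdd v) = Nmat t (Multiplicative.toAdd w) :=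
      congrArg (fun X => ((X : ↥(gamma2Stab (n + 1) t)) : GL (Fin (n + 1)) ℤ).val) h
    have h3 : (Multiplicative.toAdd v) = (Multiplicative.toAdd w) := by
      funext i
      have h4 := congrFun (congrFun h2 t) (t.succAbove i)
      rw [Nmat_apply_row, Nmat_apply_row] at h4
      exact mul_left_cancel₀ two_ne_zero h4
    exact h3
  · rintro ⟨B, hB⟩
    refine ⟨⟨liftUnit t B, liftUnit_mem t hB⟩, ?_⟩
    apply Subtype.ext; apply Units.ext
    show (liftMat t B).submatrix t.succAbove t.succAbove = (B : Matrix (Fin n) (Fin n) ℤ)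
    exact liftMat_submatrix t _
  · ext A
    simp only [MonoidHom.mem_range, MonoidHom.mem_ker]
    constructor
    · rintro ⟨v, rfl⟩
      apply Subtype.ext; apply Units.ext
      show (Nmat t _).submatrix t.succAbove t.succAbove = ((1 : ↥(Gamma2 n)) : GL (Fin n) ℤ).val
      rw [OneMemClass.coe_one, Units.val_one]
      ext i j
      rw [Matrix.submatrix_apply, Nmat_apply_succAbove]
      simp [Matrix.one_apply, Fin.succAbove_right_injective.eq_iff]
    · intro hA
      have hsub : ((A : GL (Fin (n + 1)) ℤ) : Matrix (Fin (n + 1)) (Fin (n + 1)) ℤ).submatrix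
          t.succAbove t.succAbove = 1 := by
        have h5 : (phiHom t A : GL (Fin n) ℤ).val = ((1 : ↥(Gamma2 n)) : GL (Fin n) ℤ).val := by
          rw [hA]
        rw [OneMemClass.coe_one, Units.val_one] at h5
        exact h5
      have hmod := (mem_Gamma2_iff ((A : GL (Fin (n + 1)) ℤ))).mp (mem_stab₁ t A.2)
      have heven : ∀ i : Fin n,
          (2 : ℤ) ∣ ((A : GL (Fin (n + 1)) ℤ) : Matrix (Fin (n + 1)) (Fin (n + 1)) ℤ) t
            (t.succAbove i) := by
        intro i
        have h6 := congrFun (congrFun hmod t) (t.succAbove i)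
        rw [Matrix.map_apply, Matrix.one_apply_ne (Fin.ne_succAbove t i)] at h6
        exact (ZMod.intCast_zmod_eq_zero_iff_dvd _ 2).mp h6
      refine ⟨Multiplicative.ofAdd (fun i =>
        ((A : GL (Fin (n + 1)) ℤ) : Matrix (Fin (n + 1)) (Fin (n + 1)) ℤ) t
          (t.succAbove i) / 2), ?_⟩
      apply Subtype.ext; apply Units.ext
      show Nmat t _ = ((A : GL (Fin (n + 1)) ℤ) : Matrix (Fin (n + 1)) (Fin (n + 1)) ℤ)
      ext i j
      rcases Fin.eq_self_or_succAbove t i with rfl | ⟨i', rfl⟩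
      · rcases Fin.eq_self_or_succAbove t j with rfl | ⟨j', rfl⟩
        · rw [Nmat_col, Pi.single_eq_same, (mem_colStab_iff t _).mp (mem_stab₂ t A.2),
            Pi.single_eq_same]
        · rw [Nmat_apply_row, toAdd_ofAdd, Int.mul_ediv_cancel' (heven j')]
      · rcases Fin.eq_self_or_succAbove t j with rfl | ⟨j', rfl⟩
        · rw [Nmat_col, colStab_col t (mem_stab₂ t A.2), Pi.single_apply,
            if_neg (Fin.succAbove_ne t i')]
        · rw [Nmat_apply_succAbove]
          have h7 := congrFun (congrFun hsub i') j'
          rw [Matrix.submatrix_apply] at h7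
          rw [h7]
          simp [Matrix.one_apply, Fin.succAbove_right_injective.eq_iff]
  · intro i
    show Nmat t (Multiplicative.toAdd (Multiplicative.ofAdd (Pi.single i 1))) =
      Emat (n + 1) t (t.succAbove i)
    rw [toAdd_ofAdd]
    ext a b
    rw [Emat, Nmat, Matrix.add_apply, Matrix.add_apply]
    congr 1
    rcases eq_or_ne a t with ha | ha
    · rw [ha, rowMat_apply_self]
      rcases Fin.eq_self_or_succAbove t b with rfl | ⟨b', rfl⟩
      · rw [Fin.insertNth_apply_same]
        simp only [Matrix.single, Matrix.smul_apply, Matrix.of_apply]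
        rw [if_neg (fun h => Fin.succAbove_ne t i h.2)]
        simp
      · rw [Fin.insertNth_apply_succAbove]
        rcases eq_or_ne b' i with rfl | hb
        · simp [Matrix.single, Pi.single_apply]
        · simp only [Matrix.single, Matrix.smul_apply, Matrix.of_apply,
            Pi.single_apply, if_neg hb, mul_zero]
          rw [if_neg (fun h => hb (Fin.succAbove_right_injective h.2).symm)]
          simp
    · rw [rowMat_apply_ne t _ ha]
      simp only [Matrix.single, Matrix.smul_apply, Matrix.of_apply]
      rw [if_neg (fun h => ha h.1.symm)]
      simp
end

section
/- The group GL(2,ℤ) admits the presentation ⟨x, y, z | xyxy⁻¹x⁻¹y⁻¹, (xy)⁶, z², xzyz⟩, where x = [[1,−1],[0,1]], y = [[1,0],[1,1]], z = [[0,1],[1,0]]. -/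
open Matrix

def xGL : GL (Fin 2) ℤ :=
  ⟨!![1, -1; 0, 1], !![1, 1; 0, 1], by decide, by decide⟩

def yGL : GL (Fin 2) ℤ :=
  ⟨!![1, 0; 1, 1], !![1, 0; -1, 1], by decide, by decide⟩

def zGL : GL (Fin 2) ℤ :=
  ⟨!![0, 1; 1, 0], !![0, 1; 1, 0], by decide, by decide⟩

namespace GL2Pres

abbrev F : Type := FreeGroup (Fin 3)

def rels : Set F :=
  { FreeGroup.of 0 * FreeGroup.of 1 * FreeGroup.of 0 * (FreeGroup.of 1)⁻¹ *
      (FreeGroup.of 0)⁻¹ * (FreeGroup.of 1)⁻¹,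
    (FreeGroup.of 0 * FreeGroup.of 1) ^ 6,
    FreeGroup.of 2 * FreeGroup.of 2,
    FreeGroup.of 0 * FreeGroup.of 2 * FreeGroup.of 1 * FreeGroup.of 2 }

def φ : F →* GL (Fin 2) ℤ :=
  FreeGroup.lift (fun b : Fin 3 => if b = 0 then xGL else if b = 1 then yGL else zGL)

lemma φ_of0 : φ (FreeGroup.of 0) = xGL := by simp [φ]
lemma φ_of1 : φ (FreeGroup.of 1) = yGL := by simp [φ]
lemma φ_of2 : φ (FreeGroup.of 2) = zGL := by simp [φ]

def N : Subgroup F := Subgroup.normalClosure rels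

instance : N.Normal := Subgroup.normalClosure_normal

lemma hNker : N ≤ φ.ker := by
  apply Subgroup.normalClosure_le_normal
  rintro r (rfl | rfl | rfl | rfl) <;>
    simp only [SetLike.mem_coe, MonoidHom.mem_ker, _root_.map_mul, _root_.map_inv,
      _root_.map_pow, φ_of0, φ_of1, φ_of2] <;> decide


abbrev G : Type := F ⧸ N

def mk : F →* G := QuotientGroup.mk' N

def ψ : G →* GL (Fin 2) ℤ := QuotientGroup.lift N φ hNker

lemma ψ_mk (w : F) : ψ (mk w) = φ w := rfl

def Xg : G := mk (FreeGroup.of 0)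
def Yg : G := mk (FreeGroup.of 1)
def Zg : G := mk (FreeGroup.of 2)

lemma ψ_X : ψ Xg = xGL := by rw [Xg, ψ_mk, φ_of0]
lemma ψ_Y : ψ Yg = yGL := by rw [Yg, ψ_mk, φ_of1]
lemma ψ_Z : ψ Zg = zGL := by rw [Zg, ψ_mk, φ_of2]

lemma mk_rel {r : F} (h : r ∈ rels) : mk r = 1 :=
  (QuotientGroup.eq_one_iff r).mpr (Subgroup.subset_normalClosure h)

lemma rel_braid : Xg * Yg * Xg = Yg * Xg * Yg := by
  have h := mk_rel (show _ ∈ rels from Or.inl rfl)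
  simp only [_root_.map_mul, _root_.map_inv] at h
  have : (Xg * Yg * Xg) * (Yg * Xg * Yg)⁻¹ = 1 := by
    rw [← h]; show _ = mk _ * mk _ * mk _ * (mk _)⁻¹ * (mk _)⁻¹ * (mk _)⁻¹
    rw [Xg, Yg]; group
  exact mul_inv_eq_one.mp this

lemma rel_pow6 : (Xg * Yg) ^ 6 = 1 := by
  have h := mk_rel (show _ ∈ rels from Or.inr (Or.inl rfl))
  simpa only [_root_.map_mul, _root_.map_pow, Xg, Yg] using h

lemma rel_z2 : Zg * Zg = 1 := by
  have h := mk_rel (show _ ∈ rels from Or.inr (Or.inr (Or.inl rfl)))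
  simpa only [_root_.map_mul, Zg] using h

lemma rel_xzyz : Xg * Zg * Yg * Zg = 1 := by
  have h := mk_rel (show _ ∈ rels from Or.inr (Or.inr (Or.inr rfl)))
  simpa only [_root_.map_mul, Xg, Yg, Zg] using h


/-! ### Derived elements and relations in `G` -/

def τg : G := Xg * Yg
def σg : G := Xg * Yg * Xg
def Cg : G := τg ^ 3

lemma rel_braid' : Yg * Xg * Yg = Xg * Yg * Xg := rel_braid.symm

lemma tau6 : τg ^ 6 = 1 := by rw [τg]; exact rel_pow6

lemma C_sq : Cg * Cg = 1 := by rw [Cg, ← pow_add]; exact tau6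

lemma C_inv : Cg⁻¹ = Cg := by
  rw [inv_eq_iff_mul_eq_one]; exact C_sq

lemma yx3 : (Yg * Xg) ^ 3 = Cg := by
  have h1 : (Yg * Xg) ^ 3 = (Yg * Xg * Yg) * (Xg * Yg * Xg) := by
    simp only [pow_succ, pow_zero, one_mul, mul_assoc]
  have h2 : Cg = (Xg * Yg * Xg) * (Yg * Xg * Yg) := by
    rw [Cg, τg]; simp only [pow_succ, pow_zero, one_mul, mul_assoc]
  rw [h1, h2, rel_braid']

lemma sigma_sq : σg * σg = Cg := by
  have h2 : Cg = (Xg * Yg * Xg) * (Yg * Xg * Yg) := by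
    rw [Cg, τg]; simp only [pow_succ, pow_zero, one_mul, mul_assoc]
  rw [h2, rel_braid', σg]

lemma C_comm_X : Cg * Xg = Xg * Cg := by
  have h1 : Cg * Xg = Xg * (Yg * Xg) ^ 3 := by
    rw [Cg, τg]; simp only [pow_succ, pow_zero, one_mul, mul_assoc]
  rw [h1, yx3]

lemma C_comm_Y : Cg * Yg = Yg * Cg := by
  have h1 : Yg * Cg = (Yg * Xg) ^ 3 * Yg := by
    rw [Cg, τg]; simp only [pow_succ, pow_zero, one_mul, mul_assoc]
  rw [h1, yx3]

lemma C_comm_tau : Cg * τg = τg * Cg := by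
  rw [τg, show Cg * (Xg * Yg) = (Cg * Xg) * Yg from by simp [mul_assoc], C_comm_X,
    show Xg * Cg * Yg = Xg * (Cg * Yg) from by simp [mul_assoc], C_comm_Y, ← mul_assoc]

lemma C_comm_sigma : Cg * σg = σg * Cg := by
  rw [σg, show Cg * (Xg * Yg * Xg) = (Cg * (Xg * Yg)) * Xg from by simp [mul_assoc],
    show Cg * (Xg * Yg) = Cg * τg from rfl, C_comm_tau,
    show τg * Cg * Xg = τg * (Cg * Xg) from by simp [mul_assoc], C_comm_X, τg, ← mul_assoc]

lemma tau3 : τg ^ 3 = Cg := rfl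

lemma sigma_inv : σg⁻¹ = σg * Cg := by
  symm; rw [eq_inv_iff_mul_eq_one]
  calc σg * Cg * σg = σg * (Cg * σg) := by simp [mul_assoc]
  _ = σg * (σg * Cg) := by rw [C_comm_sigma]
  _ = (σg * σg) * Cg := by simp [mul_assoc]
  _ = 1 := by rw [sigma_sq, C_sq]

lemma tau_inv : τg⁻¹ = Cg * τg ^ 2 := by
  symm; rw [eq_inv_iff_mul_eq_one]
  calc Cg * τg ^ 2 * τg = Cg * τg ^ 3 := by rw [mul_assoc, ← pow_succ]
  _ = 1 := by rw [tau3, C_sq]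

lemma Z_inv : Zg⁻¹ = Zg := by rw [inv_eq_iff_mul_eq_one]; exact rel_z2

lemma zYz : Zg * Yg * Zg = Xg⁻¹ := by
  have h := rel_xzyz
  rw [show Xg * Zg * Yg * Zg = Xg * (Zg * Yg * Zg) from by simp [mul_assoc]] at h
  exact (inv_eq_of_mul_eq_one_right h).symm

lemma zXz : Zg * Xg * Zg = Yg⁻¹ := by
  have h2 : Zg * (Xg * Zg * Yg * Zg) * Zg = Zg * Zg := by rw [rel_xzyz, mul_one]
  rw [show Zg * (Xg * Zg * Yg * Zg) * Zg = (Zg * Xg * Zg) * Yg * (Zg * Zg) from by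
    simp [mul_assoc], rel_z2, mul_one] at h2
  exact eq_inv_of_mul_eq_one_left h2

lemma XZ : Xg * Zg = Zg * Yg⁻¹ := by
  have : Zg * (Zg * Xg * Zg) = Zg * Yg⁻¹ := by rw [zXz]
  rw [show Zg * (Zg * Xg * Zg) = (Zg * Zg) * (Xg * Zg) from by simp [mul_assoc],
    rel_z2, one_mul] at this
  exact this

lemma YZ : Yg * Zg = Zg * Xg⁻¹ := by
  have : Zg * (Zg * Yg * Zg) = Zg * Xg⁻¹ := by rw [zYz]
  rw [show Zg * (Zg * Yg * Zg) = (Zg * Zg) * (Yg * Zg) from by simp [mul_assoc],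
    rel_z2, one_mul] at this
  exact this

lemma XinvZ : Xg⁻¹ * Zg = Zg * Yg := by
  have h : Yg = Zg * Xg⁻¹ * Zg := by
    rw [← inv_inv Yg, ← zXz]
    simp [_root_.mul_inv_rev, Z_inv, mul_assoc]
  rw [h, show Zg * (Zg * Xg⁻¹ * Zg) = (Zg * Zg) * (Xg⁻¹ * Zg) from by simp [mul_assoc],
    rel_z2, one_mul]

lemma YinvZ : Yg⁻¹ * Zg = Zg * Xg := by
  have h : Xg = Zg * Yg⁻¹ * Zg := by
    rw [← inv_inv Xg, ← zYz]
    simp [_root_.mul_inv_rev, Z_inv, mul_assoc]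
  rw [h, show Zg * (Zg * Yg⁻¹ * Zg) = (Zg * Zg) * (Yg⁻¹ * Zg) from by simp [mul_assoc],
    rel_z2, one_mul]


/-! ### Normal forms in `G` -/

def letterL (b : Bool) : G := σg * τg ^ (cond b 1 2)

def body (L : List Bool) : G := (L.map letterL).prod

def Θ₀ (ε : Bool) (e : Fin 3) (L : List Bool) (f : Bool) : G :=
  (cond ε Cg 1) * (τg ^ (e : ℕ) * (body L * (cond f σg 1)))

def Θ (δ ε : Bool) (e : Fin 3) (L : List Bool) (f : Bool) : G :=
  (cond δ Zg 1) * Θ₀ ε e L f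

def NF0 (g : G) : Prop := ∃ ε e L f, g = Θ₀ ε e L f
def NF (g : G) : Prop := ∃ δ ε e L f, g = Θ δ ε e L f

lemma tau_push (ε : Bool) (g : G) :
    τg * ((cond ε Cg 1) * g) = (cond ε Cg 1) * (τg * g) := by
  cases ε
  · simp
  · show τg * (Cg * g) = Cg * (τg * g)
    rw [← mul_assoc, ← C_comm_tau, mul_assoc]

lemma sigma_push (ε : Bool) (g : G) :
    σg * ((cond ε Cg 1) * g) = (cond ε Cg 1) * (σg * g) := by
  cases ε
  · simp
  · show σg * (Cg * g) = Cg * (σg * g)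
    rw [← mul_assoc, ← C_comm_sigma, mul_assoc]

lemma body_cons (b : Bool) (L : List Bool) :
    body (b :: L) = σg * (τg ^ (cond b 1 2) * body L) := by
  rw [body, List.map_cons, List.prod_cons, letterL, body, mul_assoc]

lemma body_nil : body [] = 1 := rfl

lemma C_mul_nf0 (ε e L f) : Cg * Θ₀ ε e L f = Θ₀ (!ε) e L f := by
  cases ε
  · show Cg * (1 * _) = Cg * _
    rw [one_mul]
  · show Cg * (Cg * _) = 1 * _
    rw [← mul_assoc, C_sq]

lemma tau_mul_nf0_0 (ε L f) : τg * Θ₀ ε 0 L f = Θ₀ ε 1 L f := by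
  rw [Θ₀, tau_push, Θ₀]
  congr 1
  show τg * (τg ^ (0:ℕ) * _) = τg ^ (1:ℕ) * _
  rw [← mul_assoc, ← pow_succ']

lemma tau_mul_nf0_1 (ε L f) : τg * Θ₀ ε 1 L f = Θ₀ ε 2 L f := by
  rw [Θ₀, tau_push, Θ₀]
  congr 1
  show τg * (τg ^ (1:ℕ) * _) = τg ^ (2:ℕ) * _
  rw [← mul_assoc, ← pow_succ']

lemma tau_mul_nf0_2 (ε L f) : τg * Θ₀ ε 2 L f = Θ₀ (!ε) 0 L f := by
  rw [Θ₀, tau_push]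
  have h : τg * (τg ^ ((2:Fin 3):ℕ) * (body L * cond f σg 1))
      = Cg * (body L * cond f σg 1) := by
    show τg * (τg ^ (2:ℕ) * (body L * cond f σg 1)) = _
    rw [← mul_assoc, ← pow_succ']
    have h3 : τg ^ (2+1) = Cg := tau3
    rw [h3]
  rw [h, ← mul_assoc]
  cases ε
  · show 1 * Cg * _ = Cg * (τg ^ (0:ℕ) * _)
    rw [one_mul, pow_zero, one_mul]
  · show Cg * Cg * _ = 1 * (τg ^ (0:ℕ) * _)
    rw [C_sq, pow_zero, one_mul, one_mul]

lemma sigma_mul_nf0_1 (ε L f) : σg * Θ₀ ε 1 L f = Θ₀ ε 0 (true :: L) f := by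
  rw [Θ₀, sigma_push, Θ₀, body_cons]
  congr 1
  show σg * (τg ^ (1:ℕ) * (body L * _)) = τg ^ (0:ℕ) * (σg * (τg ^ (1:ℕ) * body L) * _)
  rw [pow_zero, one_mul]
  simp only [mul_assoc]

lemma sigma_mul_nf0_2 (ε L f) : σg * Θ₀ ε 2 L f = Θ₀ ε 0 (false :: L) f := by
  rw [Θ₀, sigma_push, Θ₀, body_cons]
  congr 1
  show σg * (τg ^ (2:ℕ) * (body L * _)) = τg ^ (0:ℕ) * (σg * (τg ^ (2:ℕ) * body L) * _)
  rw [pow_zero, one_mul]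
  simp only [mul_assoc]

lemma sigma_mul_nf0_0cons (ε b L f) :
    σg * Θ₀ ε 0 (b :: L) f = Θ₀ (!ε) (cond b 1 2) L f := by
  rw [Θ₀, sigma_push, body_cons]
  have h : σg * (τg ^ ((0:Fin 3):ℕ) * (σg * (τg ^ (cond b 1 2) * body L) * cond f σg 1))
      = Cg * (τg ^ (cond b 1 2) * (body L * cond f σg 1)) := by
    rw [show ((0:Fin 3):ℕ) = 0 from rfl, pow_zero, one_mul, ← mul_assoc, ← mul_assoc,
      ← mul_assoc, sigma_sq]
    simp only [mul_assoc]
  rw [h, ← mul_assoc]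
  have he : ((cond b 1 2 : Fin 3) : ℕ) = cond b 1 2 := by cases b <;> rfl
  cases ε
  · show 1 * Cg * _ = Cg * (τg ^ ((cond b 1 2 : Fin 3):ℕ) * _)
    rw [one_mul, he]
  · show Cg * Cg * _ = 1 * (τg ^ ((cond b 1 2 : Fin 3):ℕ) * _)
    rw [C_sq, he, one_mul]

lemma sigma_mul_nf0_0nil_t (ε) : σg * Θ₀ ε 0 [] true = Θ₀ (!ε) 0 [] false := by
  rw [Θ₀, sigma_push]
  have h : σg * (τg ^ ((0:Fin 3):ℕ) * (body [] * cond true σg 1))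
      = Cg * (τg ^ ((0:Fin 3):ℕ) * (body [] * cond false σg 1)) := by
    show σg * (1 * (1 * σg)) = Cg * (1 * (1 * 1))
    rw [one_mul, one_mul, one_mul, one_mul, mul_one, sigma_sq]
  rw [h, ← mul_assoc]
  cases ε
  · show 1 * Cg * _ = Cg * _
    rw [one_mul]
  · show Cg * Cg * _ = 1 * _
    rw [C_sq]

lemma sigma_mul_nf0_0nil_f (ε) : σg * Θ₀ ε 0 [] false = Θ₀ ε 0 [] true := by
  rw [Θ₀, sigma_push, Θ₀]
  cases ε <;>
  · show _ * (σg * (1 * (1 * 1))) = _ * (1 * (1 * σg))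
    group


/-! ### NF0 closure under generators -/

lemma nf0_C {g : G} (h : NF0 g) : NF0 (Cg * g) := by
  obtain ⟨ε, e, L, f, rfl⟩ := h
  exact ⟨!ε, e, L, f, C_mul_nf0 ε e L f⟩

lemma nf0_tau {g : G} (h : NF0 g) : NF0 (τg * g) := by
  obtain ⟨ε, e, L, f, rfl⟩ := h
  fin_cases e
  · exact ⟨ε, 1, L, f, tau_mul_nf0_0 ε L f⟩
  · exact ⟨ε, 2, L, f, tau_mul_nf0_1 ε L f⟩
  · exact ⟨!ε, 0, L, f, tau_mul_nf0_2 ε L f⟩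

lemma nf0_sigma {g : G} (h : NF0 g) : NF0 (σg * g) := by
  obtain ⟨ε, e, L, f, rfl⟩ := h
  fin_cases e
  · match L, f with
    | b :: L', f => exact ⟨!ε, cond b 1 2, L', f, sigma_mul_nf0_0cons ε b L' f⟩
    | [], true => exact ⟨!ε, 0, [], false, sigma_mul_nf0_0nil_t ε⟩
    | [], false => exact ⟨ε, 0, [], true, sigma_mul_nf0_0nil_f ε⟩
  · exact ⟨ε, 0, true :: L, f, sigma_mul_nf0_1 ε L f⟩
  · exact ⟨ε, 0, false :: L, f, sigma_mul_nf0_2 ε L f⟩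

lemma X_decomp : Xg = Cg * (τg * (τg * σg)) := by
  have h : Cg * (τg * (τg * σg)) = τg ^ 6 * (τg⁻¹ * σg) := by rw [Cg]; group
  rw [h, tau6, one_mul, τg, σg]; group

lemma Y_decomp : Yg = σg * (Cg * (τg * τg)) := by
  have h : σg * (Cg * (τg * τg)) = (σg * τg⁻¹) * τg ^ 6 := by rw [Cg]; group
  rw [h, tau6, mul_one, σg, τg, rel_braid]; group

lemma Xinv_decomp : Xg⁻¹ = σg * (Cg * τg) := by
  have h : σg * (Cg * τg) = (σg * (τg⁻¹ * τg⁻¹)) * τg ^ 6 := by rw [Cg]; group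
  rw [h, tau6, mul_one, σg, τg, rel_braid]; group

lemma Yinv_decomp : Yg⁻¹ = Cg * (τg * σg) := by
  have h : Cg * (τg * σg) = (τg⁻¹ * τg⁻¹) * τg ^ 6 * σg := by rw [Cg]; group
  rw [h, tau6, mul_one, σg, τg]; group

lemma nf0_X {g : G} (h : NF0 g) : NF0 (Xg * g) := by
  have : Xg * g = Cg * (τg * (τg * (σg * g))) := by rw [X_decomp]; simp only [mul_assoc]
  rw [this]; exact nf0_C (nf0_tau (nf0_tau (nf0_sigma h)))

lemma nf0_Y {g : G} (h : NF0 g) : NF0 (Yg * g) := by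
  have : Yg * g = σg * (Cg * (τg * (τg * g))) := by rw [Y_decomp]; simp only [mul_assoc]
  rw [this]; exact nf0_sigma (nf0_C (nf0_tau (nf0_tau h)))

lemma nf0_Xinv {g : G} (h : NF0 g) : NF0 (Xg⁻¹ * g) := by
  have : Xg⁻¹ * g = σg * (Cg * (τg * g)) := by rw [Xinv_decomp]; simp only [mul_assoc]
  rw [this]; exact nf0_sigma (nf0_C (nf0_tau h))

lemma nf0_Yinv {g : G} (h : NF0 g) : NF0 (Yg⁻¹ * g) := by
  have : Yg⁻¹ * g = Cg * (τg * (σg * g)) := by rw [Yinv_decomp]; simp only [mul_assoc]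
  rw [this]; exact nf0_C (nf0_tau (nf0_sigma h))

/-! ### NF closure -/

lemma nf_of_nf0 {g : G} (h : NF0 g) : NF g := by
  obtain ⟨ε, e, L, f, rfl⟩ := h
  exact ⟨false, ε, e, L, f, by rw [Θ]; show _ = 1 * _; rw [one_mul]⟩

lemma nf_of_z_nf0 {g : G} (h : NF0 g) : NF (Zg * g) := by
  obtain ⟨ε, e, L, f, rfl⟩ := h
  exact ⟨true, ε, e, L, f, rfl⟩

lemma theta_false (ε e L f) : Θ false ε e L f = Θ₀ ε e L f := by
  rw [Θ]; show 1 * _ = _; rw [one_mul]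

lemma theta_true (ε e L f) : Θ true ε e L f = Zg * Θ₀ ε e L f := rfl

lemma nf_X {g : G} (h : NF g) : NF (Xg * g) := by
  obtain ⟨δ, ε, e, L, f, rfl⟩ := h
  cases δ
  · rw [theta_false]
    exact nf_of_nf0 (nf0_X ⟨ε, e, L, f, rfl⟩)
  · rw [theta_true, ← mul_assoc, XZ, mul_assoc]
    exact nf_of_z_nf0 (nf0_Yinv ⟨ε, e, L, f, rfl⟩)

lemma nf_Y {g : G} (h : NF g) : NF (Yg * g) := by
  obtain ⟨δ, ε, e, L, f, rfl⟩ := h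
  cases δ
  · rw [theta_false]
    exact nf_of_nf0 (nf0_Y ⟨ε, e, L, f, rfl⟩)
  · rw [theta_true, ← mul_assoc, YZ, mul_assoc]
    exact nf_of_z_nf0 (nf0_Xinv ⟨ε, e, L, f, rfl⟩)

lemma nf_Xinv {g : G} (h : NF g) : NF (Xg⁻¹ * g) := by
  obtain ⟨δ, ε, e, L, f, rfl⟩ := h
  cases δ
  · rw [theta_false]
    exact nf_of_nf0 (nf0_Xinv ⟨ε, e, L, f, rfl⟩)
  · rw [theta_true, ← mul_assoc, XinvZ, mul_assoc]
    exact nf_of_z_nf0 (nf0_Y ⟨ε, e, L, f, rfl⟩)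

lemma nf_Yinv {g : G} (h : NF g) : NF (Yg⁻¹ * g) := by
  obtain ⟨δ, ε, e, L, f, rfl⟩ := h
  cases δ
  · rw [theta_false]
    exact nf_of_nf0 (nf0_Yinv ⟨ε, e, L, f, rfl⟩)
  · rw [theta_true, ← mul_assoc, YinvZ, mul_assoc]
    exact nf_of_z_nf0 (nf0_X ⟨ε, e, L, f, rfl⟩)

lemma nf_Z {g : G} (h : NF g) : NF (Zg * g) := by
  obtain ⟨δ, ε, e, L, f, rfl⟩ := h
  cases δ
  · rw [theta_false]
    exact nf_of_z_nf0 ⟨ε, e, L, f, rfl⟩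
  · rw [theta_true, ← mul_assoc, rel_z2, one_mul]
    exact nf_of_nf0 ⟨ε, e, L, f, rfl⟩

lemma nf_Zinv {g : G} (h : NF g) : NF (Zg⁻¹ * g) := by
  rw [Z_inv]; exact nf_Z h

lemma nf_one : NF (1 : G) := by
  refine ⟨false, false, 0, [], false, ?_⟩
  simp [Θ, Θ₀, body]


lemma exists_nf (g : G) : NF g := by
  obtain ⟨w, rfl⟩ := QuotientGroup.mk'_surjective N g
  have hw : (QuotientGroup.mk' N) w ∈ Subgroup.closure ({Xg, Yg, Zg} : Set G) := by
    induction w using FreeGroup.induction_on with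
    | C1 => rw [_root_.map_one]; exact one_mem _
    | of x =>
      fin_cases x
      · exact Subgroup.subset_closure (by left; rfl)
      · exact Subgroup.subset_closure (by right; left; rfl)
      · exact Subgroup.subset_closure (by right; right; rfl)
    | inv_of x hx => rw [_root_.map_inv]; exact inv_mem hx
    | mul x y hx hy => rw [_root_.map_mul]; exact mul_mem hx hy
  have h2 : (QuotientGroup.mk' N) w ∈
      Submonoid.closure (({Xg, Yg, Zg} : Set G) ∪ ({Xg, Yg, Zg} : Set G)⁻¹) := by
    rw [← Subgroup.closure_toSubmonoid]; exact hw
  have key : ∀ x : G, x ∈ Submonoid.closure (({Xg, Yg, Zg} : Set G) ∪ ({Xg, Yg, Zg} : Set G)⁻¹) →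
      ∀ h : G, NF h → NF (x * h) := by
    intro x hx
    induction hx using Submonoid.closure_induction with
    | one => intro h hh; rw [one_mul]; exact hh
    | mul a b _ _ ha hb => intro h hh; rw [mul_assoc]; exact ha _ (hb _ hh)
    | mem a ha =>
      intro h hh
      rcases ha with (rfl | rfl | rfl) | ha
      · exact nf_X hh
      · exact nf_Y hh
      · exact nf_Z hh
      · rw [Set.mem_inv] at ha
        rcases ha with h1 | h1 | h1
        · rw [show a = Xg⁻¹ from by rw [← h1, inv_inv]]; exact nf_Xinv hh
        · rw [show a = Yg⁻¹ from by rw [← h1, inv_inv]]; exact nf_Yinv hh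
        · rw [show a = Zg⁻¹ from by rw [← h1, inv_inv]]; exact nf_Zinv hh
  have := key _ h2 1 nf_one
  rwa [mul_one] at this


/-! ### Matrix computations -/

abbrev M2 : Type := Matrix (Fin 2) (Fin 2) ℤ

def sm : M2 := !![0,-1;1,0]
def tm : M2 := !![0,-1;1,1]
def zm : M2 := !![0,1;1,0]
def Am : M2 := !![1,1;0,1]
def Bm : M2 := !![1,0;1,1]
def Dm : M2 := !![1,0;0,-1]

def Pm (L : List Bool) : M2 := (L.map (fun b => sm * tm ^ (cond b 1 2))).prod
def Rm (L : List Bool) : M2 := (L.map (fun b => tm ^ (cond b 1 2) * sm)).prod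

lemma Pm_nil : Pm [] = 1 := rfl
lemma Rm_nil : Rm [] = 1 := rfl
lemma Pm_cons (b L) : Pm (b :: L) = (sm * tm ^ (cond b 1 2)) * Pm L := by
  rw [Pm, List.map_cons, List.prod_cons, Pm]
lemma Rm_cons (b L) : Rm (b :: L) = (tm ^ (cond b 1 2) * sm) * Rm L := by
  rw [Rm, List.map_cons, List.prod_cons, Rm]

lemma Pm_mul_s (L) : Pm L * sm = sm * Rm L := by
  induction L with
  | nil => rw [Pm_nil, Rm_nil, one_mul, mul_one]
  | cons b L ih =>
    rw [Pm_cons, Rm_cons, mul_assoc, ih, ← mul_assoc, ← mul_assoc, mul_assoc sm, mul_assoc sm]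

lemma sm4 : sm ^ 4 = 1 := by decide

lemma Pm_eq (L) : Pm L = sm * Rm L * sm ^ 3 := by
  have h : Pm L * (sm * sm ^ 3) = sm * Rm L * sm ^ 3 := by
    rw [← mul_assoc, Pm_mul_s]
  rw [show sm * sm ^ 3 = sm ^ 4 from (pow_succ' sm 3).symm, sm4, mul_one] at h
  exact h

lemma det_Pm (L) : (Pm L).det = 1 := by
  induction L with
  | nil => rw [Pm_nil]; decide
  | cons b L ih =>
    rw [Pm_cons, Matrix.det_mul, ih, mul_one]
    cases b <;> decide

/-! ### Positivity -/

def Inv (P : M2) : Prop :=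
  1 ≤ P 0 0 ∧ 1 ≤ P 1 1 ∧ 0 ≤ P 0 1 ∧ 0 ≤ P 1 0 ∧ 1 ≤ P 0 1 + P 1 0

instance (P : M2) : Decidable (Inv P) := by unfold Inv; infer_instance

def Good (M : M2) : Prop := Inv (Dm * M * Dm) ∨ Inv (-(Dm * M * Dm))

instance (M : M2) : Decidable (Good M) := by unfold Good; infer_instance

lemma entry_mul (Q P : M2) (i j : Fin 2) :
    (Q * P) i j = Q i 0 * P 0 j + Q i 1 * P 1 j := by
  rw [Matrix.mul_apply, Fin.sum_univ_two]

lemma inv_A {P : M2} (h : Inv P) : Inv (Am * P) := by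
  obtain ⟨h1, h2, h3, h4, h5⟩ := h
  refine ⟨?_, ?_, ?_, ?_, ?_⟩ <;>
    simp only [entry_mul, show Am 0 0 = 1 from rfl, show Am 0 1 = 1 from rfl,
      show Am 1 0 = 0 from rfl, show Am 1 1 = 1 from rfl, one_mul, zero_mul, add_zero,
      zero_add] <;>
    linarith

lemma inv_B {P : M2} (h : Inv P) : Inv (Bm * P) := by
  obtain ⟨h1, h2, h3, h4, h5⟩ := h
  refine ⟨?_, ?_, ?_, ?_, ?_⟩ <;>
    simp only [entry_mul, show Bm 0 0 = 1 from rfl, show Bm 0 1 = 0 from rfl,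
      show Bm 1 0 = 1 from rfl, show Bm 1 1 = 1 from rfl, one_mul, zero_mul, add_zero,
      zero_add] <;>
    linarith

lemma DmDm : Dm * Dm = 1 := by decide

lemma conj_mul (M P : M2) : (Dm * M * Dm) * (Dm * P * Dm) = Dm * (M * P) * Dm := by
  rw [show (Dm * M * Dm) * (Dm * P * Dm) = Dm * M * (Dm * Dm) * P * Dm from by
    simp only [mul_assoc], DmDm, mul_one]
  simp only [mul_assoc]

lemma ts_eq : tm ^ (1:ℕ) * sm = -(Dm * Bm * Dm) := by decide
lemma t2s_eq : tm ^ (2:ℕ) * sm = -(Dm * Am * Dm) := by decide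

lemma posR (L : List Bool) (hL : L ≠ []) :
    ∃ P, (Rm L = Dm * P * Dm ∨ Rm L = -(Dm * P * Dm)) ∧ Inv P := by
  induction L with
  | nil => exact absurd rfl hL
  | cons b L ih =>
    cases L with
    | nil =>
      cases b
      · refine ⟨Am, Or.inr ?_, by decide⟩
        rw [Rm_cons, Rm_nil, mul_one]
        exact t2s_eq
      · refine ⟨Bm, Or.inr ?_, by decide⟩
        rw [Rm_cons, Rm_nil, mul_one]
        exact ts_eq
    | cons b' L' =>
      obtain ⟨P, hP, hInv⟩ := ih (by simp)
      rw [Rm_cons]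
      cases b
      · -- tm^2 * sm = -(Dm*Am*Dm)
        rcases hP with hP | hP
        · exact ⟨Am * P, Or.inr (by
            rw [hP, show (cond false 1 2 : ℕ) = 2 from rfl, t2s_eq, neg_mul, conj_mul]),
            inv_A hInv⟩
        · exact ⟨Am * P, Or.inl (by
            rw [hP, show (cond false 1 2 : ℕ) = 2 from rfl, t2s_eq, neg_mul, mul_neg,
              neg_neg, conj_mul]), inv_A hInv⟩
      · rcases hP with hP | hP
        · exact ⟨Bm * P, Or.inr (by
            rw [hP, show (cond true 1 2 : ℕ) = 1 from rfl, ts_eq, neg_mul, conj_mul]),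
            inv_B hInv⟩
        · exact ⟨Bm * P, Or.inl (by
            rw [hP, show (cond true 1 2 : ℕ) = 1 from rfl, ts_eq, neg_mul, mul_neg,
              neg_neg, conj_mul]), inv_B hInv⟩

lemma good_Rm (L : List Bool) (hL : L ≠ []) : Good (Rm L) := by
  obtain ⟨P, hP, hInv⟩ := posR L hL
  rcases hP with hP | hP
  · left
    rw [hP, show Dm * (Dm * P * Dm) * Dm = (Dm * Dm) * P * (Dm * Dm) from by
      simp only [mul_assoc], DmDm, one_mul, mul_one]
    exact hInv
  · right
    rw [hP, show Dm * -(Dm * P * Dm) * Dm = -((Dm * Dm) * P * (Dm * Dm)) from by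
      simp only [mul_assoc, neg_mul, mul_neg], DmDm, one_mul, mul_one, neg_neg]
    exact hInv


/-! ### Evaluating ψ on normal forms -/

lemma psi_sigma : ψ σg = xGL * yGL * xGL := by
  rw [σg, _root_.map_mul, _root_.map_mul, ψ_X, ψ_Y]

lemma psi_tau : ψ τg = xGL * yGL := by rw [τg, _root_.map_mul, ψ_X, ψ_Y]

lemma val_sigma : ((ψ σg : GL (Fin 2) ℤ) : M2) = sm := by rw [psi_sigma]; decide

lemma val_tau : ((ψ τg : GL (Fin 2) ℤ) : M2) = tm := by rw [psi_tau]; decide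

lemma val_C : ((ψ Cg : GL (Fin 2) ℤ) : M2) = -1 := by
  rw [Cg, _root_.map_pow, Units.val_pow_eq_pow_val, psi_tau]; decide

lemma val_cond_Z (δ : Bool) : ((ψ (cond δ Zg 1) : GL (Fin 2) ℤ) : M2) = cond δ zm 1 := by
  cases δ
  · show ((ψ (1:G) : GL (Fin 2) ℤ) : M2) = 1
    rw [_root_.map_one, Units.val_one]
  · show ((ψ Zg : GL (Fin 2) ℤ) : M2) = zm
    rw [ψ_Z]; rfl

lemma val_cond_C (ε : Bool) : ((ψ (cond ε Cg 1) : GL (Fin 2) ℤ) : M2) = cond ε (-1) 1 := by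
  cases ε
  · show ((ψ (1:G) : GL (Fin 2) ℤ) : M2) = 1
    rw [_root_.map_one, Units.val_one]
  · exact val_C

lemma val_cond_s (f : Bool) : ((ψ (cond f σg 1) : GL (Fin 2) ℤ) : M2) = cond f sm 1 := by
  cases f
  · show ((ψ (1:G) : GL (Fin 2) ℤ) : M2) = 1
    rw [_root_.map_one, Units.val_one]
  · exact val_sigma

lemma val_taupow (n : ℕ) : ((ψ (τg ^ n) : GL (Fin 2) ℤ) : M2) = tm ^ n := by
  rw [_root_.map_pow, Units.val_pow_eq_pow_val, val_tau]

lemma val_body (L : List Bool) : ((ψ (body L) : GL (Fin 2) ℤ) : M2) = Pm L := by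
  induction L with
  | nil =>
    show ((ψ (1:G) : GL (Fin 2) ℤ) : M2) = 1
    rw [_root_.map_one, Units.val_one]
  | cons b L ih =>
    rw [body_cons, _root_.map_mul, _root_.map_mul, Units.val_mul, Units.val_mul, val_sigma,
      val_taupow, ih, Pm_cons, mul_assoc]

lemma val_theta (δ ε : Bool) (e : Fin 3) (L : List Bool) (f : Bool) :
    ((ψ (Θ δ ε e L f) : GL (Fin 2) ℤ) : M2) =
      (cond δ zm 1) * ((cond ε (-1) 1) * (tm ^ (e : ℕ) * (Pm L * (cond f sm 1)))) := by
  rw [Θ, Θ₀, _root_.map_mul, _root_.map_mul, _root_.map_mul, _root_.map_mul,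
    Units.val_mul, Units.val_mul, Units.val_mul, Units.val_mul,
    val_cond_Z, val_cond_C, val_taupow, val_body, val_cond_s]

/-! ### Injectivity on normal forms -/

lemma theta_triv : Θ false false 0 [] false = 1 := by
  rw [Θ, Θ₀]
  show 1 * (1 * (τg ^ ((0 : Fin 3) : ℕ) * (body [] * 1))) = 1
  rw [body_nil, one_mul, one_mul, mul_one, mul_one]
  rfl

lemma det_tm : tm.det = 1 := by decide
lemma det_zm : zm.det = -1 := by decide

lemma sandwich {A B A' B' R : M2} (hA : A' * A = 1) (hB : B * B' = 1)
    (h : A * (R * B) = 1) : R = A' * B' := by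
  calc R = (A' * A) * R * (B * B') := by rw [hA, hB, one_mul, mul_one]
  _ = A' * (A * (R * B)) * B' := by simp only [mul_assoc]
  _ = A' * B' := by rw [h, mul_one]

lemma nf_injective (δ ε : Bool) (e : Fin 3) (L : List Bool) (f : Bool)
    (h : ψ (Θ δ ε e L f) = 1) : Θ δ ε e L f = 1 := by
  have hm : (cond δ zm 1) * ((cond ε (-1) 1) * (tm ^ (e : ℕ) * (Pm L * (cond f sm 1)))) = 1 := by
    rw [← val_theta, h, Units.val_one]
  cases δ
  case true =>
    exfalso
    have hd := congrArg Matrix.det hm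
    rw [Matrix.det_mul, Matrix.det_mul, Matrix.det_mul, Matrix.det_mul] at hd
    rw [show (cond true zm 1 : M2).det = -1 from det_zm,
      show ((cond ε (-1) 1 : M2)).det = 1 from by cases ε <;> decide,
      Matrix.det_pow, det_tm, one_pow, det_Pm,
      show ((cond f sm 1 : M2)).det = 1 from by cases f <;> decide,
      Matrix.det_one] at hd
    norm_num at hd
  case false =>
    rw [show (cond false zm 1 : M2) = 1 from rfl, one_mul] at hm
    cases L
    case nil =>
      rw [Pm_nil, one_mul] at hm
      fin_cases e <;> cases ε <;> cases f <;>
        first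
          | exact theta_triv
          | exact absurd hm (by decide)
    case cons b L' =>
      rw [Pm_eq] at hm
      have hm2 : ((cond ε (-1) 1) * tm ^ (e : ℕ) * sm) *
          (Rm (b :: L') * (sm ^ 3 * (cond f sm 1))) = 1 := by
        have e1 : ((cond ε (-1) 1) * tm ^ (e : ℕ) * sm) *
            (Rm (b :: L') * (sm ^ 3 * (cond f sm 1))) =
            (cond ε (-1) 1) * (tm ^ (e : ℕ) * (sm * Rm (b :: L') * sm ^ 3 * (cond f sm 1))) := by
          simp only [mul_assoc]
        rw [e1]; exact hm
      have hR : Rm (b :: L') =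
          (sm ^ 3 * tm ^ (6 - (e : ℕ)) * (cond ε (-1) 1)) * (cond f 1 sm) :=
        sandwich (by fin_cases e <;> cases ε <;> decide) (by cases f <;> decide) hm2
      have hG := good_Rm (b :: L') (by simp)
      rw [hR] at hG
      fin_cases e <;> cases ε <;> cases f <;> exact absurd hG (by decide)


/-! ### Surjectivity: Euclidean algorithm -/

def sGL : GL (Fin 2) ℤ := xGL * yGL * xGL
def dGL : GL (Fin 2) ℤ := zGL * sGL
def CGL : GL (Fin 2) ℤ := (xGL * yGL) ^ 3
def Hgl : Subgroup (GL (Fin 2) ℤ) := Subgroup.closure {xGL, yGL, zGL}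

lemma x_mem : xGL ∈ Hgl := Subgroup.subset_closure (by left; rfl)
lemma y_mem : yGL ∈ Hgl := Subgroup.subset_closure (by right; left; rfl)
lemma z_mem : zGL ∈ Hgl := Subgroup.subset_closure (by right; right; rfl)
lemma s_mem : sGL ∈ Hgl := mul_mem (mul_mem x_mem y_mem) x_mem
lemma d_mem : dGL ∈ Hgl := mul_mem z_mem s_mem
lemma C_mem : CGL ∈ Hgl := pow_mem (mul_mem x_mem y_mem) 3

lemma fin2_congr {a b c d a' b' c' d' : ℤ} (h1 : a = a') (h2 : b = b') (h3 : c = c')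
    (h4 : d = d') : !![a,b;c,d] = !![a',b';c',d'] := by rw [h1, h2, h3, h4]

lemma neg_fin_two (a b c d : ℤ) : -(!![a,b;c,d]) = !![-a,-b;-c,-d] := by
  ext i j
  fin_cases i <;> fin_cases j <;> simp

lemma val_xGL : ((xGL : GL (Fin 2) ℤ) : M2) = !![1,-1;0,1] := rfl
lemma val_xGL_inv : ((xGL⁻¹ : GL (Fin 2) ℤ) : M2) = !![1,1;0,1] := rfl
lemma val_CGL : ((CGL : GL (Fin 2) ℤ) : M2) = -1 := by decide
lemma val_dGL : ((dGL : GL (Fin 2) ℤ) : M2) = !![1,0;0,-1] := by decide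
lemma val_sGL_inv' : ((sGL⁻¹ : GL (Fin 2) ℤ) : M2) = !![0,1;-1,0] := by decide

lemma xpow_val (b : ℤ) : ((xGL ^ (-b) : GL (Fin 2) ℤ) : M2) = !![1, b; 0, 1] := by
  induction b using Int.induction_on with
  | zero => rw [neg_zero, zpow_zero, Units.val_one]; decide
  | succ n ih =>
    rw [show (-((n : ℤ) + 1)) = -(n : ℤ) + (-1) from by ring, _root_.zpow_add, Units.val_mul, ih,
      _root_.zpow_neg_one, val_xGL_inv, Matrix.mul_fin_two]
    exact fin2_congr (by ring) (by ring) (by ring) (by ring)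
  | pred n ih =>
    rw [show (-(-(n : ℤ) - 1)) = -(-(n : ℤ)) + 1 from by ring, _root_.zpow_add, Units.val_mul, ih,
      zpow_one, val_xGL, Matrix.mul_fin_two]
    exact fin2_congr (by ring) (by ring) (by ring) (by ring)

lemma xpow_val' (q : ℤ) : ((xGL ^ q : GL (Fin 2) ℤ) : M2) = !![1, -q; 0, 1] := by
  have h := xpow_val (-q); rwa [neg_neg] at h

lemma mem_Hgl : ∀ g : GL (Fin 2) ℤ, g ∈ Hgl := by
  suffices H : ∀ n : ℕ, ∀ g : GL (Fin 2) ℤ, ((g : M2) 1 0).natAbs = n → g ∈ Hgl from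
    fun g => H _ g rfl
  intro n
  induction n using Nat.strong_induction_on with
  | _ n IH =>
  intro g hn
  by_cases hc : (g : M2) 1 0 = 0
  · -- c = 0 : four sign cases
    have hdet1 : (g : M2).det * ((g⁻¹ : GL (Fin 2) ℤ) : M2).det = 1 := by
      rw [← Matrix.det_mul, ← Units.val_mul, mul_inv_cancel, Units.val_one, Matrix.det_one]
    have hdet := Int.isUnit_iff.mp (IsUnit.of_mul_eq_one _ hdet1)
    rw [Matrix.det_fin_two, hc, mul_zero, sub_zero] at hdet
    have hM := Matrix.eta_fin_two (g : M2)
    rw [hc] at hM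
    obtain ⟨a, ha'⟩ : ∃ x, (g : M2) 0 0 = x := ⟨_, rfl⟩
    obtain ⟨b, hb'⟩ : ∃ x, (g : M2) 0 1 = x := ⟨_, rfl⟩
    obtain ⟨d, hd'⟩ : ∃ x, (g : M2) 1 1 = x := ⟨_, rfl⟩
    rw [ha', hb', hd'] at hM
    rw [ha', hd'] at hdet
    rcases hdet with hdet | hdet
    · rcases Int.mul_eq_one_iff_eq_one_or_neg_one.mp hdet with ⟨ha, hd⟩ | ⟨ha, hd⟩
      · have hg2 : g = xGL ^ (-b) := by
          apply Units.ext
          rw [xpow_val]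
          rw [ha, hd] at hM
          exact hM
        rw [hg2]; exact zpow_mem x_mem _
      · have hg2 : g = CGL * xGL ^ b := by
          apply Units.ext
          rw [Units.val_mul, val_CGL, xpow_val', neg_one_mul, neg_fin_two]
          rw [ha, hd] at hM
          rw [hM]
          exact fin2_congr (by ring) (by ring) (by ring) (by ring)
        rw [hg2]; exact mul_mem C_mem (zpow_mem x_mem _)
    · have hdet2 : a * (-d) = 1 := by
        rw [mul_neg, hdet, neg_neg]
      rcases Int.mul_eq_one_iff_eq_one_or_neg_one.mp hdet2 with ⟨ha, hd⟩ | ⟨ha, hd⟩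
      · have hdd : d = -1 := by omega
        have hg2 : g = xGL ^ b * dGL := by
          apply Units.ext
          rw [Units.val_mul, xpow_val', val_dGL, Matrix.mul_fin_two]
          rw [ha, hdd] at hM
          rw [hM]
          exact fin2_congr (by ring) (by ring) (by ring) (by ring)
        rw [hg2]; exact mul_mem (zpow_mem x_mem _) d_mem
      · have hdd : d = 1 := by omega
        have hg2 : g = CGL * (xGL ^ (-b) * dGL) := by
          apply Units.ext
          rw [Units.val_mul, Units.val_mul, val_CGL, xpow_val, val_dGL, neg_one_mul,
            Matrix.mul_fin_two, neg_fin_two]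
          rw [ha, hdd] at hM
          rw [hM]
          exact fin2_congr (by ring) (by ring) (by ring) (by ring)
        rw [hg2]; exact mul_mem C_mem (mul_mem (zpow_mem x_mem _) d_mem)
  · -- c ≠ 0 : Euclidean step
    have hg' : (sGL⁻¹ * (xGL ^ ((g : M2) 0 0 / (g : M2) 1 0) * g)) ∈ Hgl := by
      apply IH _ _ _ rfl
      have hval : (((sGL⁻¹ * (xGL ^ ((g : M2) 0 0 / (g : M2) 1 0) * g) : GL (Fin 2) ℤ)) : M2) 1 0
          = -((g : M2) 0 0 % (g : M2) 1 0) := by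
        rw [Units.val_mul, Units.val_mul, val_sGL_inv', xpow_val', ← mul_assoc,
          Matrix.mul_fin_two]
        rw [entry_mul]
        have e1 : (!![0 * 1 + 1 * 0, 0 * -((g : M2) 0 0 / (g : M2) 1 0) + 1 * 1;
            -1 * 1 + 0 * 0, -1 * -((g : M2) 0 0 / (g : M2) 1 0) + 0 * 1] : M2) 1 0 = -1 := by
          norm_num
        have e2 : (!![0 * 1 + 1 * 0, 0 * -((g : M2) 0 0 / (g : M2) 1 0) + 1 * 1;
            -1 * 1 + 0 * 0, -1 * -((g : M2) 0 0 / (g : M2) 1 0) + 0 * 1] : M2) 1 1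
            = (g : M2) 0 0 / (g : M2) 1 0 := by
          norm_num
        rw [e1, e2, Int.emod_def]
        ring
      rw [hval, Int.natAbs_neg]
      have h1 : 0 ≤ (g : M2) 0 0 % (g : M2) 1 0 := Int.emod_nonneg _ hc
      have h2 : (g : M2) 0 0 % (g : M2) 1 0 < |(g : M2) 1 0| := Int.emod_lt_abs _ hc
      rw [Int.abs_eq_natAbs] at h2
      omega
    have hg2 : g = xGL ^ (-((g : M2) 0 0 / (g : M2) 1 0)) *
        (sGL * (sGL⁻¹ * (xGL ^ ((g : M2) 0 0 / (g : M2) 1 0) * g))) := by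
      rw [mul_inv_cancel_left, _root_.zpow_neg, inv_mul_cancel_left]
    rw [hg2]
    exact mul_mem (zpow_mem x_mem _) (mul_mem s_mem hg')

end GL2Pres


/-- GL(2,ℤ) = ⟨x, y, z ∣ xyxy⁻¹x⁻¹y⁻¹, (xy)⁶, z², xzyz⟩ -/
theorem gl2_presentation :
    Function.Surjective
      (FreeGroup.lift (fun b : Fin 3 => if b = 0 then xGL else if b = 1 then yGL else zGL)) ∧
    (FreeGroup.lift (fun b : Fin 3 => if b = 0 then xGL else if b = 1 then yGL else zGL)).ker =
      Subgroup.normalClosure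
        ({ FreeGroup.of 0 * FreeGroup.of 1 * FreeGroup.of 0 * (FreeGroup.of 1)⁻¹ *
             (FreeGroup.of 0)⁻¹ * (FreeGroup.of 1)⁻¹,
           (FreeGroup.of 0 * FreeGroup.of 1) ^ 6,
           FreeGroup.of 2 * FreeGroup.of 2,
           FreeGroup.of 0 * FreeGroup.of 2 * FreeGroup.of 1 * FreeGroup.of 2 } :
          Set (FreeGroup (Fin 3))) := by
  constructor
  · intro g
    have hg := GL2Pres.mem_Hgl g
    have hle : GL2Pres.Hgl ≤ GL2Pres.φ.range := by
      rw [GL2Pres.Hgl]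
      apply (Subgroup.closure_le _).mpr
      rintro x (rfl | rfl | rfl)
      · exact ⟨FreeGroup.of 0, GL2Pres.φ_of0⟩
      · exact ⟨FreeGroup.of 1, GL2Pres.φ_of1⟩
      · exact ⟨FreeGroup.of 2, GL2Pres.φ_of2⟩
    obtain ⟨w, hw⟩ := hle hg
    exact ⟨w, hw⟩
  · show GL2Pres.φ.ker = GL2Pres.N
    apply le_antisymm
    · intro w hw
      have hw1 : GL2Pres.φ w = 1 := hw
      obtain ⟨δ, ε, e, L, f, hθ⟩ := GL2Pres.exists_nf (GL2Pres.mk w)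
      have h1 : GL2Pres.ψ (GL2Pres.Θ δ ε e L f) = 1 := by
        rw [← hθ]; exact hw1
      have h2 := GL2Pres.nf_injective δ ε e L f h1
      have h3 : GL2Pres.mk w = 1 := by rw [hθ, h2]
      exact (QuotientGroup.eq_one_iff w).mp h3
    · exact GL2Pres.hNker
end

section
/- Γ₂(2) is generated by the four matrices g₁ = [[1,2],[0,1]], g₂ = [[1,2],[0,−1]], g₃ = [[1,0],[2,1]], g₄ = [[−1,0],[2,1]]. Equivalently, Γ₂(2) is generated by E₁₂, E₂₁, F₁ and F₂. -/
open Matrix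

def g1 : GL (Fin 2) ℤ := ⟨!![1, 2; 0, 1], !![1, -2; 0, 1], by decide, by decide⟩
def g2 : GL (Fin 2) ℤ := ⟨!![1, 2; 0, -1], !![1, 2; 0, -1], by decide, by decide⟩
def g3 : GL (Fin 2) ℤ := ⟨!![1, 0; 2, 1], !![1, 0; -2, 1], by decide, by decide⟩
def g4 : GL (Fin 2) ℤ := ⟨!![-1, 0; 2, 1], !![-1, 0; 2, 1], by decide, by decide⟩

def F1 : GL (Fin 2) ℤ := ⟨!![-1, 0; 0, 1], !![-1, 0; 0, 1], by decide, by decide⟩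
def F2 : GL (Fin 2) ℤ := ⟨!![1, 0; 0, -1], !![1, 0; 0, -1], by decide, by decide⟩

lemma castZero (x : ℤ) : ((x : ZMod 2) = 0) ↔ Even x := by
  rw [ZMod.intCast_zmod_eq_zero_iff_dvd, Int.even_iff]; omega

lemma castOne (x : ℤ) : ((x : ZMod 2) = 1) ↔ Odd x := by
  rw [show (1 : ZMod 2) = ((1:ℤ) : ZMod 2) by norm_num, ZMod.intCast_eq_intCast_iff,
    Int.ModEq, Int.odd_iff]; omega

lemma mem_gamma2_iff (M : GL (Fin 2) ℤ) : M ∈ Gamma2 2 ↔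
    Odd (M 0 0) ∧ Even (M 0 1) ∧ Even (M 1 0) ∧ Odd (M 1 1) := by
  rw [Gamma2, MonoidHom.mem_ker, Matrix.GeneralLinearGroup.ext_iff]
  constructor
  · intro h
    have h00 := h 0 0; have h01 := h 0 1; have h10 := h 1 0; have h11 := h 1 1
    simp [Matrix.GeneralLinearGroup.map_apply] at h00 h01 h10 h11
    exact ⟨(castOne _).1 h00, (castZero _).1 h01, (castZero _).1 h10, (castOne _).1 h11⟩
  · rintro ⟨h00, h01, h10, h11⟩ i j
    fin_cases i <;> fin_cases j <;>
      simp [Matrix.GeneralLinearGroup.map_apply, castOne, castZero, *]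

lemma g1_mem : g1 ∈ Gamma2 2 := by
  rw [mem_gamma2_iff]
  exact ⟨⟨0, by rfl⟩, ⟨1, by rfl⟩, ⟨0, by rfl⟩, ⟨0, by rfl⟩⟩

lemma g3_mem : g3 ∈ Gamma2 2 := by
  rw [mem_gamma2_iff]
  exact ⟨⟨0, by rfl⟩, ⟨0, by rfl⟩, ⟨1, by rfl⟩, ⟨0, by rfl⟩⟩

lemma F1_mem : F1 ∈ Gamma2 2 := by
  rw [mem_gamma2_iff]
  exact ⟨⟨-1, by rfl⟩, ⟨0, by rfl⟩, ⟨0, by rfl⟩, ⟨0, by rfl⟩⟩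

lemma F2_mem : F2 ∈ Gamma2 2 := by
  rw [mem_gamma2_iff]
  exact ⟨⟨0, by rfl⟩, ⟨0, by rfl⟩, ⟨0, by rfl⟩, ⟨-1, by rfl⟩⟩

lemma g1_zpow (k : ℤ) :
    ((g1 ^ k : GL (Fin 2) ℤ) : Matrix (Fin 2) (Fin 2) ℤ) = !![1, 2*k; 0, 1] := by
  induction k using Int.induction_on with
  | zero => simp [Matrix.one_fin_two]
  | succ n ih => rw [_root_.zpow_add_one, Units.val_mul, ih, g1]
                 simp [Matrix.mul_fin_two]; ring_nf
  | pred n ih => rw [_root_.zpow_sub_one, Units.val_mul, ih]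
                 have : ((g1⁻¹ : GL (Fin 2) ℤ) : Matrix (Fin 2) (Fin 2) ℤ) = !![1, -2; 0, 1] := rfl
                 rw [this]; simp [Matrix.mul_fin_two]; ring_nf

lemma g3_zpow (k : ℤ) :
    ((g3 ^ k : GL (Fin 2) ℤ) : Matrix (Fin 2) (Fin 2) ℤ) = !![1, 0; 2*k, 1] := by
  induction k using Int.induction_on with
  | zero => simp [Matrix.one_fin_two]
  | succ n ih => rw [_root_.zpow_add_one, Units.val_mul, ih, g3]
                 simp [Matrix.mul_fin_two]; ring_nf
  | pred n ih => rw [_root_.zpow_sub_one, Units.val_mul, ih]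
                 have : ((g3⁻¹ : GL (Fin 2) ℤ) : Matrix (Fin 2) (Fin 2) ℤ) = !![1, 0; -2, 1] := rfl
                 rw [this]; simp [Matrix.mul_fin_two]; ring_nf

lemma balanced_pos (x y : ℤ) (hy : 0 < y) : ∃ k : ℤ, (x + 2*k*y).natAbs ≤ y.natAbs := by
  refine ⟨-((x + y)/(2*y)), ?_⟩
  have h1 := Int.mul_ediv_add_emod (x+y) (2*y)
  have h2 := Int.emod_nonneg (x+y) (by omega : (2*y) ≠ 0)
  have h3 := Int.emod_lt_of_pos (x+y) (by omega : 0 < 2*y)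
  have e : x + 2*(-((x + y)/(2*y)))*y = (x+y) % (2*y) - y := by linear_combination -h1
  rw [e]; omega

lemma balanced (x y : ℤ) (hy : y ≠ 0) : ∃ k : ℤ, (x + 2*k*y).natAbs ≤ y.natAbs := by
  rcases hy.lt_or_gt with h | h
  · obtain ⟨k, hk⟩ := balanced_pos x (-y) (by omega)
    refine ⟨-k, ?_⟩
    have : x + 2*(-k)*y = x + 2*k*(-y) := by ring
    rw [this]; omega
  · exact balanced_pos x y h

lemma closure_S2 (M : GL (Fin 2) ℤ) (hM : M ∈ Gamma2 2) :
    M ∈ Subgroup.closure {g1, g3, F1, F2} := by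
  set H := Subgroup.closure {g1, g3, F1, F2} with hH
  have hg1H : g1 ∈ H := Subgroup.subset_closure (by simp)
  have hg3H : g3 ∈ H := Subgroup.subset_closure (by simp)
  have hF1H : F1 ∈ H := Subgroup.subset_closure (by simp)
  have hF2H : F2 ∈ H := Subgroup.subset_closure (by simp)
  suffices key : ∀ n : ℕ, ∀ M : GL (Fin 2) ℤ, M ∈ Gamma2 2 → (M 1 0).natAbs ≤ n → M ∈ H by
    exact key _ M hM le_rfl
  intro n
  induction n using Nat.strong_induction_on with
  | _ n ih =>
    intro M hM hn
    obtain ⟨ha, hb, hc, hd⟩ := (mem_gamma2_iff M).1 hM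
    have hMv : (M : Matrix (Fin 2) (Fin 2) ℤ) = !![M 0 0, M 0 1; M 1 0, M 1 1] :=
      Matrix.eta_fin_two _
    by_cases h0 : M 1 0 = 0
    · -- base case: upper triangular
      have hdet : IsUnit ((M : Matrix (Fin 2) (Fin 2) ℤ).det) :=
        (Matrix.isUnit_iff_isUnit_det _).1 M.isUnit
      rw [Int.isUnit_iff, Matrix.det_fin_two] at hdet
      rw [h0] at hdet
      obtain ⟨b', hb'⟩ := hb
      have hb2 : M 0 1 = 2 * b' := by omega
      have had : M 0 0 = 1 ∧ M 1 1 = 1 ∨ M 0 0 = 1 ∧ M 1 1 = -1 ∨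
          M 0 0 = -1 ∧ M 1 1 = 1 ∨ M 0 0 = -1 ∧ M 1 1 = -1 := by
        have h1 : M 0 0 ∣ 1 := by
          rcases hdet with h | h
          · exact ⟨M 1 1, by linarith⟩
          · exact ⟨-(M 1 1), by linarith⟩
        have h2 : M 0 0 = 1 ∨ M 0 0 = -1 := Int.isUnit_iff.1 (isUnit_of_dvd_one h1)
        rcases h2 with h2 | h2 <;> rcases hdet with h | h <;> rw [h2] at h <;> omega
      rcases had with ⟨ha1, hd1⟩ | ⟨ha1, hd1⟩ | ⟨ha1, hd1⟩ | ⟨ha1, hd1⟩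
      · have : M = g1 ^ b' := by
          ext1
          rw [g1_zpow, hMv, ha1, hd1, h0, hb2]
        rw [this]; exact zpow_mem hg1H _
      · have : M = F2 * g1 ^ b' := by
          ext1
          rw [Units.val_mul, g1_zpow, hMv, ha1, hd1, h0, hb2]
          have hF : (F2 : Matrix (Fin 2) (Fin 2) ℤ) = !![1,0;0,-1] := rfl
          rw [hF, Matrix.mul_fin_two]
          norm_num
        rw [this]; exact mul_mem hF2H (zpow_mem hg1H _)
      · have : M = F1 * g1 ^ (-b') := by
          ext1
          rw [Units.val_mul, g1_zpow, hMv, ha1, hd1, h0, hb2]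
          have hF : (F1 : Matrix (Fin 2) (Fin 2) ℤ) = !![-1,0;0,1] := rfl
          rw [hF, Matrix.mul_fin_two]
          norm_num
        rw [this]; exact mul_mem hF1H (zpow_mem hg1H _)
      · have : M = F1 * F2 * g1 ^ (-b') := by
          ext1
          rw [Units.val_mul, Units.val_mul, g1_zpow, hMv, ha1, hd1, h0, hb2]
          have hF : (F1 : Matrix (Fin 2) (Fin 2) ℤ) = !![-1,0;0,1] := rfl
          have hF' : (F2 : Matrix (Fin 2) (Fin 2) ℤ) = !![1,0;0,-1] := rfl
          rw [hF, hF', Matrix.mul_fin_two, Matrix.mul_fin_two]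
          norm_num
        rw [this]; exact mul_mem (mul_mem hF1H hF2H) (zpow_mem hg1H _)
    · -- inductive step
      obtain ⟨k1, hk1⟩ := balanced (M 0 0) (M 1 0) h0
      obtain ⟨a', ha', hk1'⟩ :
          ∃ a', a' = M 0 0 + 2*k1*(M 1 0) ∧ a'.natAbs ≤ (M 1 0).natAbs := ⟨_, rfl, hk1⟩
      have ha'' : a' = M 0 0 + 2*(k1*(M 1 0)) := by rw [ha']; ring
      have haodd : (M 0 0) % 2 = 1 := Int.odd_iff.1 ha
      have hceven : (M 1 0) % 2 = 0 := Int.even_iff.1 hc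
      have ha'odd : a' % 2 = 1 := by omega
      have hlt1 : a'.natAbs < (M 1 0).natAbs := by omega
      have ha'0 : a' ≠ 0 := by omega
      obtain ⟨k2, hk2⟩ := balanced (M 1 0) a' ha'0
      obtain ⟨c', hc', hk2'⟩ :
          ∃ c', c' = M 1 0 + 2*k2*a' ∧ c'.natAbs ≤ a'.natAbs := ⟨_, rfl, hk2⟩
      set P : GL (Fin 2) ℤ := g3 ^ k2 * (g1 ^ k1 * M) with hP
      have hPmem : P ∈ Gamma2 2 :=
        mul_mem (zpow_mem g3_mem _) (mul_mem (zpow_mem g1_mem _) hM)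
      have hPv : (P : Matrix (Fin 2) (Fin 2) ℤ) =
          !![1,0;2*k2,1] * (!![1,2*k1;0,1] * (M : Matrix (Fin 2) (Fin 2) ℤ)) := by
        rw [hP, Units.val_mul, Units.val_mul, g1_zpow, g3_zpow]
      have hP10 : P 1 0 = c' := by
        show (P : Matrix (Fin 2) (Fin 2) ℤ) 1 0 = c'
        rw [hPv, hMv, Matrix.mul_fin_two, Matrix.mul_fin_two, hc', ha']
        simp
        ring
      have hlt : (P 1 0).natAbs < n := by
        rw [hP10]; omega
      have hPH : P ∈ H := ih _ hlt P hPmem le_rfl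
      have hMeq : M = (g1 ^ k1)⁻¹ * ((g3 ^ k2)⁻¹ * P) := by
        rw [hP]; group
      rw [hMeq]
      exact mul_mem (inv_mem (zpow_mem hg1H _)) (mul_mem (inv_mem (zpow_mem hg3H _)) hPH)

/-- Γ₂(2) is generated by g₁, g₂, g₃, g₄; equivalently by E₁₂ = g₁, E₂₁ = g₃, F₁, F₂. -/
theorem gamma2_two_generators :
    Subgroup.closure {g1, g2, g3, g4} = Gamma2 2 ∧
    Subgroup.closure {g1, g3, F1, F2} = Gamma2 2 := by
  have hS2 : Subgroup.closure {g1, g3, F1, F2} = Gamma2 2 := by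
    apply le_antisymm
    · rw [Subgroup.closure_le]
      rintro x (rfl | rfl | rfl | rfl)
      exacts [g1_mem, g3_mem, F1_mem, F2_mem]
    · intro M hM; exact closure_S2 M hM
  refine ⟨?_, hS2⟩
  rw [← hS2]
  apply le_antisymm
  · rw [Subgroup.closure_le]
    have h2 : g2 = g1⁻¹ * F2 := by ext1; decide
    have h4 : g4 = g3⁻¹ * F1 := by ext1; decide
    rintro x (rfl | rfl | rfl | rfl)
    · exact Subgroup.subset_closure (by simp)
    · rw [h2]
      exact mul_mem (inv_mem (Subgroup.subset_closure (by simp)))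
        (Subgroup.subset_closure (by simp))
    · exact Subgroup.subset_closure (by simp)
    · rw [h4]
      exact mul_mem (inv_mem (Subgroup.subset_closure (by simp)))
        (Subgroup.subset_closure (by simp))
  · rw [Subgroup.closure_le]
    have hF2 : F2 = g1 * g2 := by ext1; decide
    have hF1 : F1 = g3 * g4 := by ext1; decide
    rintro x (rfl | rfl | rfl | rfl)
    · exact Subgroup.subset_closure (by simp)
    · exact Subgroup.subset_closure (by simp)
    · rw [hF1]
      exact mul_mem (Subgroup.subset_closure (by simp))
        (Subgroup.subset_closure (by simp))
    · rw [hF2]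
      exact mul_mem (Subgroup.subset_closure (by simp))
        (Subgroup.subset_closure (by simp))
end

section
/- The simplicial complex Γ₂B_n(ℤ) is path connected for n ≥ 2; that is, for any two primitive vectors v, w ∈ ℤⁿ that occur as columns of matrices in Γ₂(n), there is a finite sequence v = v₀, v₁, …, v_m = w such that each consecutive pair {v_i, v_{i+1}} is a pair of distinct columns of some matrix in Γ₂(n). -/
open Matrix

/-- `v` occurs as a column of some matrix in Γ₂(n). -/
def IsGamma2Column (n : ℕ) (v : Fin n → ℤ) : Prop :=
  ∃ A ∈ Gamma2 n, ∃ j : Fin n, (fun i => (A : Matrix (Fin n) (Fin n) ℤ) i j) = v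

namespace G2Aux

/-! ### basic defs -/

def Edge (n : ℕ) (v w : Fin n → ℤ) : Prop :=
  ∃ A ∈ Gamma2 n, ∃ j k : Fin n, j ≠ k ∧
    (fun l => (A : Matrix (Fin n) (Fin n) ℤ) l j) = v ∧
    (fun l => (A : Matrix (Fin n) (Fin n) ℤ) l k) = w

def Conn (n : ℕ) : (Fin n → ℤ) → (Fin n → ℤ) → Prop := Relation.ReflTransGen (Edge n)

theorem Edge.symm {n v w} (h : Edge n v w) : Edge n w v := by
  obtain ⟨A, hA, j, k, hjk, h1, h2⟩ := h
  exact ⟨A, hA, k, j, hjk.symm, h2, h1⟩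

theorem Conn.symm {n v w} (h : Conn n v w) : Conn n w v :=
  by haveI : Std.Symm (Edge n) := ⟨fun _ _ h => Edge.symm h⟩; exact (Relation.ReflTransGen.stdSymm (r := Edge n)).symm _ _ h

theorem mem_Gamma2_iff {n : ℕ} (A : GL (Fin n) ℤ) :
    A ∈ Gamma2 n ↔ (A : Matrix (Fin n) (Fin n) ℤ).map (Int.cast : ℤ → ZMod 2) = 1 := by
  rw [Gamma2, MonoidHom.mem_ker]
  constructor
  · intro h
    have := congrArg Units.val h
    simpa [Matrix.GeneralLinearGroup.map] using this
  · intro h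
    apply Units.ext
    simpa [Matrix.GeneralLinearGroup.map] using h

/-! ### parity helpers -/

theorem intCast_zmod2_eq_one {x : ℤ} (h : x % 2 = 1) : (x : ZMod 2) = 1 := by
  obtain ⟨k, hk⟩ : ∃ k, x = 2 * k + 1 := ⟨x / 2, by omega⟩
  subst hk; push_cast; rw [show (2 : ZMod 2) = 0 by decide]; ring

theorem intCast_zmod2_eq_zero {x : ℤ} (h : x % 2 = 0) : (x : ZMod 2) = 0 := by
  rw [ZMod.intCast_zmod_eq_zero_iff_dvd]; omega

theorem mod_two_eq_one_of_cast {x : ℤ} (h : (x : ZMod 2) = 1) : x % 2 = 1 := by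
  by_contra hc
  have h0 : (x : ZMod 2) = 0 := intCast_zmod2_eq_zero (by omega)
  rw [h0] at h; exact absurd h (by decide)

theorem mod_two_eq_zero_of_cast {x : ℤ} (h : (x : ZMod 2) = 0) : x % 2 = 0 := by
  rw [ZMod.intCast_zmod_eq_zero_iff_dvd] at h; omega

theorem gamma2_entry_diag {n : ℕ} {A : GL (Fin n) ℤ} (hA : A ∈ Gamma2 n) (i : Fin n) :
    (A : Matrix (Fin n) (Fin n) ℤ) i i % 2 = 1 := by
  rw [mem_Gamma2_iff] at hA
  have := congrFun (congrFun hA i) i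
  rw [Matrix.map_apply, Matrix.one_apply_eq] at this
  exact mod_two_eq_one_of_cast this

theorem gamma2_entry_off {n : ℕ} {A : GL (Fin n) ℤ} (hA : A ∈ Gamma2 n) {i j : Fin n}
    (h : i ≠ j) : (A : Matrix (Fin n) (Fin n) ℤ) i j % 2 = 0 := by
  rw [mem_Gamma2_iff] at hA
  have := congrFun (congrFun hA i) j
  rw [Matrix.map_apply, Matrix.one_apply_ne h] at this
  exact mod_two_eq_zero_of_cast this

/-! ### elementary matrices -/

def elemU (n : ℕ) (a b : Fin n) (hab : a ≠ b) (m : ℤ) : GL (Fin n) ℤ where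
  val := 1 + single a b (2*m)
  inv := 1 - single a b (2*m)
  val_inv := by
    have h : single a b (2*m) * single a b (2*m) = 0 :=
      Matrix.single_mul_single_of_ne (c := 2*m) a b a hab.symm (2*m)
    noncomm_ring
    simp only [smul_eq_mul, h]
    simp
  inv_val := by
    have h : single a b (2*m) * single a b (2*m) = 0 :=
      Matrix.single_mul_single_of_ne (c := 2*m) a b a hab.symm (2*m)
    noncomm_ring
    simp only [smul_eq_mul, h]
    simp

theorem elemU_mem (n : ℕ) (a b : Fin n) (hab : a ≠ b) (m : ℤ) :
    elemU n a b hab m ∈ Gamma2 n := by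
  rw [mem_Gamma2_iff]
  ext r s
  simp only [elemU, Matrix.map_apply, Matrix.add_apply]
  push_cast
  by_cases h : r = a ∧ s = b
  · obtain ⟨rfl, rfl⟩ := h
    rw [Matrix.single_apply_same]
    rw [Matrix.one_apply_ne hab, Matrix.one_apply_ne hab]
    push_cast
    rw [show (2 : ZMod 2) = 0 by decide]; ring
  · have h2 : single a b (2*m) r s = 0 := by
      apply Matrix.single_apply_of_ne
      exact fun hc => h ⟨hc.1.symm, hc.2.symm⟩
    rw [h2]
    by_cases hrs : r = s <;> simp [hrs, Matrix.one_apply]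

theorem mul_elemU_apply {n : ℕ} (A : GL (Fin n) ℤ) (a b : Fin n) (hab : a ≠ b) (m : ℤ)
    (r s : Fin n) :
    ((A * elemU n a b hab m : GL (Fin n) ℤ) : Matrix (Fin n) (Fin n) ℤ) r s
      = (A : Matrix (Fin n) (Fin n) ℤ) r s
        + if s = b then (A : Matrix (Fin n) (Fin n) ℤ) r a * (2*m) else 0 := by
  have : ((A * elemU n a b hab m : GL (Fin n) ℤ) : Matrix (Fin n) (Fin n) ℤ)
      = (A : Matrix (Fin n) (Fin n) ℤ) * (1 + single a b (2*m)) := rfl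
  rw [this, mul_add, mul_one, Matrix.add_apply]
  congr 1
  by_cases hs : s = b
  · subst hs
    rw [Matrix.mul_single_apply_same, if_pos rfl]
  · rw [Matrix.mul_single_apply_of_ne (c := 2*m) a b r s hs, if_neg hs]

/-! ### connectivity of columns under column operations -/

def col {n : ℕ} (A : GL (Fin n) ℤ) (j : Fin n) : Fin n → ℤ :=
  fun l => (A : Matrix (Fin n) (Fin n) ℤ) l j

theorem conn_cols {n : ℕ} {A : GL (Fin n) ℤ} (hA : A ∈ Gamma2 n) (s t : Fin n) :
    Conn n (col A s) (col A t) := by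
  by_cases hst : s = t
  · subst hst; exact Relation.ReflTransGen.refl
  · exact Relation.ReflTransGen.single ⟨A, hA, s, t, hst, rfl, rfl⟩

theorem conn_cols_mul_elemU {n : ℕ} {A : GL (Fin n) ℤ} (hA : A ∈ Gamma2 n)
    (a b : Fin n) (hab : a ≠ b) (m : ℤ) (s t : Fin n) :
    Conn n (col A s) (col (A * elemU n a b hab m) t) := by
  have hA' : A * elemU n a b hab m ∈ Gamma2 n :=
    Subgroup.mul_mem _ hA (elemU_mem n a b hab m)
  have hcol : col A a = col (A * elemU n a b hab m) a := by
    funext l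
    rw [col, col, mul_elemU_apply, if_neg hab]
    ring
  have h1 : Conn n (col A s) (col A a) := conn_cols hA s a
  rw [hcol] at h1
  exact h1.trans (conn_cols hA' a t)

/-! ### arithmetic -/

theorem arith1 {x y : ℤ} (hx : x % 2 = 1) (hy : y % 2 = 0) (h : x.natAbs < y.natAbs) :
    ∃ m : ℤ, (y + 2*m*x).natAbs < y.natAbs := by
  rcases le_or_gt 0 x with hx0 | hx0 <;> rcases le_or_gt 0 y with hy0 | hy0
  · exact ⟨-1, by omega⟩
  · exact ⟨1, by omega⟩
  · exact ⟨1, by omega⟩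
  · exact ⟨-1, by omega⟩

theorem arith2 {x y : ℤ} (hx : x % 2 = 1) (hy : y % 2 = 0) (hy0 : y ≠ 0)
    (h : y.natAbs < x.natAbs) :
    ∃ m : ℤ, (x + 2*m*y).natAbs < x.natAbs := by
  rcases le_or_gt 0 x with hx0 | hx0 <;> rcases le_or_gt 0 y with hy1 | hy1
  · exact ⟨-1, by omega⟩
  · exact ⟨1, by omega⟩
  · exact ⟨1, by omega⟩
  · exact ⟨-1, by omega⟩

/-! ### row reduction -/

theorem row_sum_lt {n : ℕ} (f f' : Fin n → ℤ) (c : Fin n)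
    (hrow : ∀ s, s ≠ c → f' s = f s) (hc : (f' c).natAbs < (f c).natAbs) :
    (∑ s, (f' s).natAbs) < ∑ s, (f s).natAbs := by
  apply Finset.sum_lt_sum
  · intro s _
    by_cases hs : s = c
    · subst hs; exact le_of_lt hc
    · rw [hrow s hs]
  · exact ⟨c, Finset.mem_univ c, hc⟩

theorem reduce {n : ℕ} : ∀ N : ℕ, ∀ A : GL (Fin n) ℤ, A ∈ Gamma2 n → ∀ i : Fin n,
    (∑ s, ((A : Matrix (Fin n) (Fin n) ℤ) i s).natAbs) ≤ N →
    ∃ B : GL (Fin n) ℤ, B ∈ Gamma2 n ∧ (∀ s, s ≠ i → (B : Matrix (Fin n) (Fin n) ℤ) i s = 0) ∧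
      ∀ s t, Conn n (col A s) (col B t) := by
  intro N
  induction N using Nat.strong_induction_on with
  | _ N IH =>
    intro A hA i hsum
    by_cases h0 : ∀ s, s ≠ i → (A : Matrix (Fin n) (Fin n) ℤ) i s = 0
    · exact ⟨A, hA, h0, conn_cols hA⟩
    · push_neg at h0
      obtain ⟨b, hbi, hb0⟩ := h0
      have hx : (A : Matrix (Fin n) (Fin n) ℤ) i i % 2 = 1 := gamma2_entry_diag hA i
      have hy : (A : Matrix (Fin n) (Fin n) ℤ) i b % 2 = 0 := gamma2_entry_off hA (Ne.symm hbi)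
      rcases lt_trichotomy ((A : Matrix (Fin n) (Fin n) ℤ) i i).natAbs
          ((A : Matrix (Fin n) (Fin n) ℤ) i b).natAbs with hlt | heq | hgt
      · -- reduce entry at column b
        obtain ⟨m, hm⟩ := arith1 hx hy hlt
        set A' := A * elemU n i b (Ne.symm hbi) m with hA'def
        have hA' : A' ∈ Gamma2 n := Subgroup.mul_mem _ hA (elemU_mem n i b (Ne.symm hbi) m)
        have hrow : ∀ s, s ≠ b → (A' : Matrix (Fin n) (Fin n) ℤ) i s
            = (A : Matrix (Fin n) (Fin n) ℤ) i s := by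
          intro s hs
          rw [hA'def, mul_elemU_apply, if_neg hs, add_zero]
        have hchange : ((A' : Matrix (Fin n) (Fin n) ℤ) i b).natAbs
            < ((A : Matrix (Fin n) (Fin n) ℤ) i b).natAbs := by
          rw [hA'def, mul_elemU_apply, if_pos rfl]
          have : (A : Matrix (Fin n) (Fin n) ℤ) i b + (A : Matrix (Fin n) (Fin n) ℤ) i i * (2*m)
              = (A : Matrix (Fin n) (Fin n) ℤ) i b + 2*m*(A : Matrix (Fin n) (Fin n) ℤ) i i := by
            ring
          rw [this]
          exact hm
        have hlt2 : (∑ s, ((A' : Matrix (Fin n) (Fin n) ℤ) i s).natAbs)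
            < ∑ s, ((A : Matrix (Fin n) (Fin n) ℤ) i s).natAbs :=
          row_sum_lt _ _ b hrow hchange
        obtain ⟨B, hB, hBrow, hBconn⟩ :=
          IH (∑ s, ((A' : Matrix (Fin n) (Fin n) ℤ) i s).natAbs)
            (lt_of_lt_of_le hlt2 hsum) A' hA' i (le_refl _)
        refine ⟨B, hB, hBrow, fun s t => ?_⟩
        exact (conn_cols_mul_elemU hA i b (Ne.symm hbi) m s s).trans (hBconn s t)
      · exfalso; omega
      · -- reduce entry at column i
        obtain ⟨m, hm⟩ := arith2 hx hy hb0 hgt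
        set A' := A * elemU n b i hbi m with hA'def
        have hA' : A' ∈ Gamma2 n := Subgroup.mul_mem _ hA (elemU_mem n b i hbi m)
        have hrow : ∀ s, s ≠ i → (A' : Matrix (Fin n) (Fin n) ℤ) i s
            = (A : Matrix (Fin n) (Fin n) ℤ) i s := by
          intro s hs
          rw [hA'def, mul_elemU_apply, if_neg hs, add_zero]
        have hchange : ((A' : Matrix (Fin n) (Fin n) ℤ) i i).natAbs
            < ((A : Matrix (Fin n) (Fin n) ℤ) i i).natAbs := by
          rw [hA'def, mul_elemU_apply, if_pos rfl]
          have : (A : Matrix (Fin n) (Fin n) ℤ) i i + (A : Matrix (Fin n) (Fin n) ℤ) i b * (2*m)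
              = (A : Matrix (Fin n) (Fin n) ℤ) i i + 2*m*(A : Matrix (Fin n) (Fin n) ℤ) i b := by
            ring
          rw [this]
          exact hm
        have hlt2 : (∑ s, ((A' : Matrix (Fin n) (Fin n) ℤ) i s).natAbs)
            < ∑ s, ((A : Matrix (Fin n) (Fin n) ℤ) i s).natAbs :=
          row_sum_lt _ _ i hrow hchange
        obtain ⟨B, hB, hBrow, hBconn⟩ :=
          IH (∑ s, ((A' : Matrix (Fin n) (Fin n) ℤ) i s).natAbs)
            (lt_of_lt_of_le hlt2 hsum) A' hA' i (le_refl _)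
        refine ⟨B, hB, hBrow, fun s t => ?_⟩
        exact (conn_cols_mul_elemU hA b i hbi m s s).trans (hBconn s t)

/-! ### column replacement matrices -/

def colRepM {n : ℕ} (b : Fin n → ℤ) (i : Fin n) : Matrix (Fin n) (Fin n) ℤ :=
  Matrix.of fun r s => if s = i then b r else if r = s then 1 else 0

theorem colRepM_apply {n : ℕ} (b : Fin n → ℤ) (i r s : Fin n) :
    colRepM b i r s = if s = i then b r else if r = s then 1 else 0 := rfl

theorem colRepM_mul {n : ℕ} (b c : Fin n → ℤ) (i : Fin n) :
    colRepM b i * colRepM c i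
      = colRepM (fun r => b r * c i + if r = i then 0 else c r) i := by
  ext r s
  rw [Matrix.mul_apply]
  simp only [colRepM_apply]
  by_cases hs : s = i
  · rw [if_pos hs]
    subst hs
    have hcong : ∀ t : Fin n,
        (if t = s then b r else if r = t then 1 else 0) * (if s = s then c t else if t = s then 1 else 0)
        = ((if t = s then b r * c s else 0) + (if t = s then 0 else if t = r then c r else 0)) := by
      intro t
      rw [if_pos rfl]
      by_cases ht : t = s
      · simp [ht]
      · by_cases htr : r = t
        · subst htr; simp [ht]
        · simp [ht, htr, show ¬ t = r from fun h => htr h.symm]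
    rw [Finset.sum_congr rfl (fun t _ => hcong t), Finset.sum_add_distrib]
    rw [Finset.sum_ite_eq' Finset.univ s (fun _ => b r * c s)]
    by_cases hr : r = s
    · have : ∀ t : Fin n, (if t = s then (0:ℤ) else if t = r then c r else 0) = 0 := by
        intro t
        by_cases ht : t = s
        · simp [ht]
        · simp [ht, show ¬ t = r from fun h => ht (h.trans hr)]
      rw [Finset.sum_congr rfl (fun t _ => this t)]
      simp [hr]
    · have : ∀ t : Fin n, (if t = s then (0:ℤ) else if t = r then c r else 0)
          = (if t = r then c r else 0) := by
        intro t
        by_cases ht : t = s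
        · simp [ht, show ¬ s = r from fun h => hr h.symm]
        · simp [ht]
      rw [Finset.sum_congr rfl (fun t _ => this t),
        Finset.sum_ite_eq' Finset.univ r (fun _ => c r)]
      simp [hr]
  · rw [if_neg hs]
    have hcong : ∀ t : Fin n,
        (if t = i then b r else if r = t then 1 else 0) * (if s = i then c t else if t = s then 1 else 0)
        = (if t = s then (if r = s then 1 else 0) else 0) := by
      intro t
      rw [if_neg hs]
      by_cases ht : t = s
      · have hti : ¬ t = i := fun h => hs (ht.symm.trans h)
        simp [ht, hs]
      · rw [if_neg ht, mul_zero, if_neg ht]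
    rw [Finset.sum_congr rfl (fun t _ => hcong t),
      Finset.sum_ite_eq' Finset.univ s (fun _ => if r = s then (1:ℤ) else 0)]
    simp

theorem colRepM_one {n : ℕ} (i : Fin n) :
    colRepM (fun r => if r = i then (1:ℤ) else 0) i = 1 := by
  ext r s
  rw [colRepM_apply, Matrix.one_apply]
  by_cases hs : s = i
  · simp [hs]
  · rw [if_neg hs]

theorem colRepM_unit_aux {n : ℕ} (b : Fin n → ℤ) (i : Fin n) (hb : b i = 1 ∨ b i = -1) :
    colRepM b i * colRepM (fun r => if r = i then b i else - b i * b r) i = 1 ∧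
    colRepM (fun r => if r = i then b i else - b i * b r) i * colRepM b i = 1 := by
  have hsq : b i * b i = 1 := by rcases hb with h | h <;> rw [h] <;> ring
  set c : Fin n → ℤ := fun r => if r = i then b i else - b i * b r with hc
  have hci : c i = b i := by rw [hc]; simp
  constructor
  · rw [colRepM_mul]
    have hfun : (fun r => b r * c i + if r = i then 0 else c r)
        = fun r => if r = i then (1:ℤ) else 0 := by
      funext r
      rw [hci]
      by_cases hr : r = i
      · subst hr; simp [hsq]
      · rw [if_neg hr, if_neg hr, hc]
        simp only [if_neg hr]
        ring
    rw [hfun, colRepM_one]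
  · rw [colRepM_mul]
    have hfun : (fun r => c r * b i + if r = i then 0 else b r)
        = fun r => if r = i then (1:ℤ) else 0 := by
      funext r
      by_cases hr : r = i
      · subst hr; rw [hci]; simp [hsq]
      · rw [if_neg hr, if_neg hr, hc]
        simp only [if_neg hr]
        have : b i * b i * b r = b r := by rw [hsq]; ring
        nlinarith [this]
    rw [hfun, colRepM_one]

/-! ### edges to basis vectors -/

def ebase {n : ℕ} (k : Fin n) : Fin n → ℤ := fun l => if l = k then 1 else 0

theorem edge_ebase {n : ℕ} {k l : Fin n} (hkl : k ≠ l) : Edge n (ebase k) (ebase l) := by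
  refine ⟨1, Subgroup.one_mem _, k, l, hkl, ?_, ?_⟩ <;>
  · funext t
    show (1 : Matrix (Fin n) (Fin n) ℤ) t _ = _
    rw [Matrix.one_apply]
    rfl

theorem edge_col_ebase {n : ℕ} {B : GL (Fin n) ℤ} (hB : B ∈ Gamma2 n) {i : Fin n}
    (hrow : ∀ s, s ≠ i → (B : Matrix (Fin n) (Fin n) ℤ) i s = 0) {k : Fin n} (hki : k ≠ i) :
    Edge n (col B i) (ebase k) := by
  set b : Fin n → ℤ := col B i with hbdef
  have hunit : b i * (B.inv i i) = 1 := by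
    have h1 := congrArg (fun M => M i i) B.val_inv
    simp only [Matrix.one_apply_eq] at h1
    rw [Matrix.mul_apply] at h1
    rw [Finset.sum_eq_single i] at h1
    · exact h1
    · intro t _ ht
      rw [hrow t ht, zero_mul]
    · intro h; exact absurd (Finset.mem_univ i) h
  have hb : b i = 1 ∨ b i = -1 := Int.isUnit_iff.mp (IsUnit.of_mul_eq_one _ hunit)
  obtain ⟨h1, h2⟩ := colRepM_unit_aux b i hb
  set U : GL (Fin n) ℤ := ⟨colRepM b i, colRepM (fun r => if r = i then b i else - b i * b r) i, h1, h2⟩ with hUdef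
  have hBmap := (mem_Gamma2_iff B).mp hB
  have hU : U ∈ Gamma2 n := by
    rw [mem_Gamma2_iff]
    ext r s
    rw [Matrix.map_apply]
    show ((colRepM b i r s : ℤ) : ZMod 2) = _
    rw [colRepM_apply]
    by_cases hs : s = i
    · subst hs
      have := congrFun (congrFun hBmap r) s
      rw [Matrix.map_apply] at this
      rw [if_pos rfl]
      exact this
    · rw [if_neg hs]
      by_cases hrs : r = s
      · subst hrs; rw [if_pos rfl, Matrix.one_apply_eq]; norm_num
      · rw [if_neg hrs, Matrix.one_apply_ne hrs]; norm_num
  refine ⟨U, hU, i, k, Ne.symm hki, ?_, ?_⟩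
  · funext l
    show colRepM b i l i = b l
    rw [colRepM_apply, if_pos rfl]
  · funext l
    show colRepM b i l k = ebase k l
    rw [colRepM_apply, if_neg hki]
    rfl

/-! ### every Γ₂ column is connected to a basis vector -/

theorem conn_to_ebase {n : ℕ} (hn : 2 ≤ n) {v : Fin n → ℤ} (hv : IsGamma2Column n v) :
    ∃ k : Fin n, Conn n v (ebase k) := by
  obtain ⟨A, hA, j, hcol⟩ := hv
  obtain ⟨B, hB, hBrow, hBconn⟩ := reduce (∑ s, ((A : Matrix (Fin n) (Fin n) ℤ) j s).natAbs)
    A hA j (le_refl _)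
  have : Nontrivial (Fin n) := Fin.nontrivial_iff_two_le.mpr hn
  obtain ⟨k, hk⟩ := exists_ne j
  refine ⟨k, ?_⟩
  have h1 : Conn n v (col B j) := by
    have := hBconn j j
    rwa [show col A j = v from hcol] at this
  exact h1.trans (Relation.ReflTransGen.single (edge_col_ebase hB hBrow hk))

/-! ### path extraction -/

theorem conn_to_path {n : ℕ} {v w : Fin n → ℤ} (h : Conn n v w) :
    ∃ (m : ℕ) (p : Fin (m + 1) → (Fin n → ℤ)),
      p 0 = v ∧ p (Fin.last m) = w ∧ ∀ i : Fin m, Edge n (p i.castSucc) (p i.succ) := by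
  induction h with
  | refl => exact ⟨0, fun _ => v, rfl, rfl, fun i => i.elim0⟩
  | tail hab hbc IH =>
    obtain ⟨m, p, h0, hl, he⟩ := IH
    refine ⟨m + 1, Fin.snoc p _, ?_, Fin.snoc_last _ _, ?_⟩
    · rw [show (0 : Fin (m + 2)) = Fin.castSucc 0 from (Fin.castSucc_zero).symm,
        Fin.snoc_castSucc]
      exact h0
    · intro i
      refine Fin.lastCases ?_ ?_ i
      · rw [Fin.succ_last, Fin.snoc_last, Fin.snoc_castSucc, hl]
        exact hbc
      · intro j
        rw [Fin.succ_castSucc, Fin.snoc_castSucc, Fin.snoc_castSucc]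
        exact he j

end G2Aux

/-- The complex Γ₂B_n(ℤ) is path connected for n ≥ 2. -/
theorem gamma2_complex_path_connected (n : ℕ) (hn : 2 ≤ n)
    (v w : Fin n → ℤ) (hv : IsGamma2Column n v) (hw : IsGamma2Column n w) :
    ∃ (m : ℕ) (p : Fin (m + 1) → (Fin n → ℤ)),
      p 0 = v ∧ p (Fin.last m) = w ∧
      ∀ i : Fin m, ∃ A ∈ Gamma2 n, ∃ j k : Fin n, j ≠ k ∧
        (fun l => (A : Matrix (Fin n) (Fin n) ℤ) l j) = p i.castSucc ∧
        (fun l => (A : Matrix (Fin n) (Fin n) ℤ) l k) = p i.succ := by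
  obtain ⟨k1, hk1⟩ := G2Aux.conn_to_ebase hn hv
  obtain ⟨k2, hk2⟩ := G2Aux.conn_to_ebase hn hw
  have hmid : G2Aux.Conn n (G2Aux.ebase k1) (G2Aux.ebase k2) := by
    by_cases h : k1 = k2
    · subst h; exact Relation.ReflTransGen.refl
    · exact Relation.ReflTransGen.single (G2Aux.edge_ebase h)
  have hconn : G2Aux.Conn n v w := (hk1.trans hmid).trans hk2.symm
  exact G2Aux.conn_to_path hconn
end
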